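/- arXiv:2509.19683 — 5 statements merged into one kernel-verified Lean document; each statement's English description precedes it below -/
import Mathlib

section
/- Let m_h denote the number of minimal vertex covers of a perfect binary tree of height h. Then m_0 = 1, m_1 = 2, m_2 = 4, and for all h ≥ 2, m_{h+1} = 2·m_h·m_{h-2}^4 + m_{h-1}^4 - m_{h-2}^8. -/
/-- The perfect binary tree of height `h`, on vertex set `Fin (2^(h+1) - 1)`
with heap indexing: the children of vertex `i` are `2*i+1` and `2*i+2`. -/
def perfectBinaryTree (h : ℕ) : SimpleGraph (Fin (2 ^ (h + 1) - 1)) :=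
  SimpleGraph.fromRel (fun i j => (j : ℕ) = 2 * (i : ℕ) + 1 ∨ (j : ℕ) = 2 * (i : ℕ) + 2)

/-- The height of a vertex (in heap indexing) is `log₂ (v+1)`. -/
def heapHeight {n : ℕ} (v : Fin n) : ℕ := Nat.log 2 ((v : ℕ) + 1)

variable {V : Type*}

/-- A vertex cover of a graph: a set of vertices meeting every edge. -/
def SimpleGraph.IsVertexCover' (G : SimpleGraph V) (C : Finset V) : Prop :=
  ∀ ⦃u v : V⦄, G.Adj u v → u ∈ C ∨ v ∈ C

/-- A minimal vertex cover: no proper subset is a vertex cover. -/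
def SimpleGraph.IsMinimalVertexCover (G : SimpleGraph V) (C : Finset V) : Prop :=
  G.IsVertexCover' C ∧ ∀ D : Finset V, D ⊂ C → ¬ G.IsVertexCover' D

/-- The number of minimal vertex covers of a graph. -/
noncomputable def SimpleGraph.numMinimalVertexCovers (G : SimpleGraph V) : ℕ :=
  {C : Finset V | G.IsMinimalVertexCover C}.ncard

/-- The vertex cover number: smallest cardinality of a vertex cover. -/
noncomputable def SimpleGraph.vertexCoverNumber (G : SimpleGraph V) : ℕ :=
  sInf {k | ∃ C : Finset V, G.IsVertexCover' C ∧ C.card = k}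

/-- An independent set: no two of its vertices are adjacent. -/
def SimpleGraph.IsIndepSet' (G : SimpleGraph V) (W : Finset V) : Prop :=
  ∀ u ∈ W, ∀ v ∈ W, ¬ G.Adj u v

/-- A maximal independent set. -/
def SimpleGraph.IsMaximalIndepSet (G : SimpleGraph V) (W : Finset V) : Prop :=
  G.IsIndepSet' W ∧ ∀ D : Finset V, W ⊂ D → ¬ G.IsIndepSet' D

/-- The independence number: largest cardinality of an independent set. -/
noncomputable def SimpleGraph.indepNumber (G : SimpleGraph V) : ℕ :=
  sSup {k | ∃ W : Finset V, G.IsIndepSet' W ∧ W.card = k}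

/-- The minimum size of a maximal independent set. -/
noncomputable def SimpleGraph.minMaximalIndepSetSize (G : SimpleGraph V) : ℕ :=
  sInf {k | ∃ W : Finset V, G.IsMaximalIndepSet W ∧ W.card = k}

/-- The matching number: largest cardinality of a set of pairwise disjoint edges. -/
noncomputable def SimpleGraph.matchingNumber (G : SimpleGraph V) : ℕ :=
  sSup {k | ∃ M : Finset (Sym2 V), (↑M : Set (Sym2 V)) ⊆ G.edgeSet ∧
    ((↑M : Set (Sym2 V)).Pairwise fun e f => ∀ v : V, v ∈ e → v ∉ f) ∧ M.card = k}

set_option linter.unusedSectionVars false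

-- helpers
lemma ncard_congr_equiv {α β : Type*} (e : α ≃ β) {s : Set α} {t : Set β}
    (h : ∀ a, a ∈ s ↔ e a ∈ t) : s.ncard = t.ncard := by
  rw [← Nat.card_coe_set_eq, ← Nat.card_coe_set_eq]
  exact Nat.card_congr (e.subtypeEquiv h)

def MISset (G : SimpleGraph V) : Set (Finset V) :=
  {S | G.IsIndepSet' S ∧ ∀ v : V, v ∉ S → ∃ u ∈ S, G.Adj u v}

def Bset (G : SimpleGraph V) (r : V) : Set (Finset V) :=
  {S | S ∈ MISset G ∧ r ∉ S}

def Dset (G : SimpleGraph V) (r : V) : Set (Finset V) :=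
  {S | G.IsIndepSet' S ∧ r ∉ S ∧ ∀ v : V, v ∉ S → v ≠ r → ∃ u ∈ S, G.Adj u v}

variable [Fintype V] [DecidableEq V]

lemma isMinVC_iff_compl (G : SimpleGraph V) (C : Finset V) :
    G.IsMinimalVertexCover C ↔ Cᶜ ∈ MISset G := by
  have hvc : G.IsVertexCover' C ↔ G.IsIndepSet' Cᶜ := by
    constructor
    · intro h u hu v hv hadj
      rcases h hadj with h' | h' <;> simp_all [Finset.mem_compl]
    · intro h u v hadj
      by_contra hc
      push_neg at hc
      exact h u (Finset.mem_compl.2 hc.1) v (Finset.mem_compl.2 hc.2) hadj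
  constructor
  · rintro ⟨h1, h2⟩
    refine ⟨hvc.1 h1, fun v hv => ?_⟩
    rw [Finset.mem_compl, not_not] at hv
    by_contra hc
    push_neg at hc
    refine h2 (C.erase v) (Finset.erase_ssubset hv) ?_
    intro a b hadj
    rcases h1 hadj with h' | h'
    · by_cases hav : a = v
      · subst hav
        rcases h1 hadj.symm with h'' | h''
        · right; exact Finset.mem_erase.2 ⟨fun hbv => by subst hbv; exact G.irrefl hadj, h''⟩
        · right
          refine Finset.mem_erase.2 ⟨fun hbv => by subst hbv; exact G.irrefl hadj, ?_⟩
          by_contra hbC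
          exact hc b (Finset.mem_compl.2 hbC) hadj.symm
      · left; exact Finset.mem_erase.2 ⟨hav, h'⟩
    · by_cases hbv : b = v
      · subst hbv
        left
        refine Finset.mem_erase.2 ⟨fun hav => by subst hav; exact G.irrefl hadj, ?_⟩
        by_contra haC
        exact hc a (Finset.mem_compl.2 haC) hadj
      · right; exact Finset.mem_erase.2 ⟨hbv, h'⟩
  · rintro ⟨h1, h2⟩
    refine ⟨hvc.2 h1, fun D hD hDvc => ?_⟩
    obtain ⟨v, hvC, hvD⟩ := Finset.exists_of_ssubset hD
    obtain ⟨u, hu, hadj⟩ := h2 v (by simpa [Finset.mem_compl] using hvC)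
    rcases hDvc hadj with h' | h'
    · exact (Finset.mem_compl.1 hu) (hD.1 h')
    · exact hvD h'

lemma numMinVC_eq_ncard_MISset (G : SimpleGraph V) :
    G.numMinimalVertexCovers = (MISset G).ncard := by
  apply ncard_congr_equiv (⟨compl, compl, compl_compl, compl_compl⟩ : Finset V ≃ Finset V)
  intro C
  exact isMinVC_iff_compl G C

def Aset (G : SimpleGraph V) (r : V) : Set (Finset V) :=
  {S | S ∈ MISset G ∧ r ∈ S}

section join
variable {α β : Type*} [DecidableEq α] [DecidableEq β]

def joinRel (G : SimpleGraph α) (H : SimpleGraph β) (a : α) (b : β) :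
    Option (α ⊕ β) → Option (α ⊕ β) → Prop
  | none, none => False
  | none, some (.inl x) => x = a
  | none, some (.inr y) => y = b
  | some (.inl x), none => x = a
  | some (.inr y), none => y = b
  | some (.inl x), some (.inl y) => G.Adj x y
  | some (.inr x), some (.inr y) => H.Adj x y
  | some (.inl _), some (.inr _) => False
  | some (.inr _), some (.inl _) => False

def rootJoin (G : SimpleGraph α) (H : SimpleGraph β) (a : α) (b : β) :
    SimpleGraph (Option (α ⊕ β)) where
  Adj := joinRel G H a b
  symm := ⟨by
    rintro (_ | x | y) (_ | x' | y') h <;> simp_all [joinRel] <;> exact h.symm⟩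
  loopless := ⟨by
    rintro (_ | x | y) h <;> simp_all [joinRel]⟩

variable (G : SimpleGraph α) (H : SimpleGraph β) (a : α) (b : β)

@[simp] lemma rj_nn : ¬ (rootJoin G H a b).Adj none none := id
@[simp] lemma rj_nl (x : α) : (rootJoin G H a b).Adj none (some (.inl x)) ↔ x = a := Iff.rfl
@[simp] lemma rj_nr (y : β) : (rootJoin G H a b).Adj none (some (.inr y)) ↔ y = b := Iff.rfl
@[simp] lemma rj_ln (x : α) : (rootJoin G H a b).Adj (some (.inl x)) none ↔ x = a := Iff.rfl
@[simp] lemma rj_rn (y : β) : (rootJoin G H a b).Adj (some (.inr y)) none ↔ y = b := Iff.rfl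
@[simp] lemma rj_ll (x y : α) : (rootJoin G H a b).Adj (some (.inl x)) (some (.inl y)) ↔ G.Adj x y := Iff.rfl
@[simp] lemma rj_rr (x y : β) : (rootJoin G H a b).Adj (some (.inr x)) (some (.inr y)) ↔ H.Adj x y := Iff.rfl
@[simp] lemma rj_lr (x : α) (y : β) : ¬ (rootJoin G H a b).Adj (some (.inl x)) (some (.inr y)) := id
@[simp] lemma rj_rl (y : β) (x : α) : ¬ (rootJoin G H a b).Adj (some (.inr y)) (some (.inl x)) := id

noncomputable def p₁ (S : Finset (Option (α ⊕ β))) : Finset α :=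
  S.preimage (fun x => some (.inl x)) (by intro x _ y _ h; simpa using h)

noncomputable def p₂ (S : Finset (Option (α ⊕ β))) : Finset β :=
  S.preimage (fun y => some (.inr y)) (by intro x _ y _ h; simpa using h)

@[simp] lemma mem_p₁ (S : Finset (Option (α ⊕ β))) (x : α) :
    x ∈ p₁ S ↔ some (Sum.inl x) ∈ S := Finset.mem_preimage
@[simp] lemma mem_p₂ (S : Finset (Option (α ⊕ β))) (y : β) :
    y ∈ p₂ S ↔ some (Sum.inr y) ∈ S := Finset.mem_preimage

lemma mem_Aset_iff (S : Finset (Option (α ⊕ β))) :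
    S ∈ Aset (rootJoin G H a b) none ↔
      none ∈ S ∧ p₁ S ∈ Dset G a ∧ p₂ S ∈ Dset H b := by
  simp only [Aset, MISset, Dset, SimpleGraph.IsIndepSet', Set.mem_setOf_eq,
    Option.forall, Option.exists, Sum.forall, Sum.exists, mem_p₁, mem_p₂,
    rj_nn, rj_nl, rj_nr, rj_ln, rj_rn, rj_ll, rj_rr, rj_lr, rj_rl]
  constructor
  · rintro ⟨⟨hind, hdom⟩, hr⟩
    refine ⟨hr, ⟨?_, ?_, ?_⟩, ⟨?_, ?_, ?_⟩⟩
    · intro x hx y hy; exact (hind.2.1 x hx).2.1 y hy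
    · intro hc; exact (hind.1 hr).2.1 a hc rfl
    · intro v hv hva
      rcases hdom.2.1 v hv with ⟨hn, h⟩ | ⟨u, hu, hadj⟩ | ⟨u, hu, hadj⟩
      · exact absurd h hva
      · exact ⟨u, hu, hadj⟩
      · exact hadj.elim
    · intro x hx y hy; exact (hind.2.2 x hx).2.2 y hy
    · intro hc; exact (hind.1 hr).2.2 b hc rfl
    · intro v hv hvb
      rcases hdom.2.2 v hv with ⟨hn, h⟩ | ⟨u, hu, hadj⟩ | ⟨u, hu, hadj⟩
      · exact absurd h hvb
      · exact hadj.elim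
      · exact ⟨u, hu, hadj⟩
  · rintro ⟨hr, ⟨hind1, ha1, hdom1⟩, ⟨hind2, hb2, hdom2⟩⟩
    refine ⟨⟨⟨?_, ?_, ?_⟩, ?_, ?_, ?_⟩, hr⟩
    · intro _; exact ⟨fun _ h => h, fun x hx hxa => ha1 (hxa ▸ hx), fun y hy hyb => hb2 (hyb ▸ hy)⟩
    · intro x hx
      exact ⟨fun hn hxa => ha1 (hxa ▸ hx), fun y hy => hind1 x hx y hy, fun y hy => id⟩
    · intro y hy
      exact ⟨fun hn hyb => hb2 (hyb ▸ hy), fun x hx => id, fun y' hy' => hind2 y hy y' hy'⟩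
    · intro hn; exact absurd hr hn
    · intro x hx
      by_cases hxa : x = a
      · exact Or.inl ⟨hr, hxa⟩
      · rcases hdom1 x hx hxa with ⟨u, hu, hadj⟩
        exact Or.inr (Or.inl ⟨u, hu, hadj⟩)
    · intro y hy
      by_cases hyb : y = b
      · exact Or.inl ⟨hr, hyb⟩
      · rcases hdom2 y hy hyb with ⟨u, hu, hadj⟩
        exact Or.inr (Or.inr ⟨u, hu, hadj⟩)
end join

section join2
variable {α β : Type*} [DecidableEq α] [DecidableEq β]
variable (G : SimpleGraph α) (H : SimpleGraph β) (a : α) (b : β)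

lemma mem_Bset_iff (S : Finset (Option (α ⊕ β))) :
    S ∈ Bset (rootJoin G H a b) none ↔
      none ∉ S ∧ p₁ S ∈ MISset G ∧ p₂ S ∈ MISset H ∧ (a ∈ p₁ S ∨ b ∈ p₂ S) := by
  simp only [Bset, MISset, SimpleGraph.IsIndepSet', Set.mem_setOf_eq,
    Option.forall, Option.exists, Sum.forall, Sum.exists, mem_p₁, mem_p₂,
    rj_nn, rj_nl, rj_nr, rj_ln, rj_rn, rj_ll, rj_rr, rj_lr, rj_rl]
  constructor
  · rintro ⟨⟨hind, hdom⟩, hr⟩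
    refine ⟨hr, ⟨?_, ?_⟩, ⟨?_, ?_⟩, ?_⟩
    · intro x hx y hy; exact (hind.2.1 x hx).2.1 y hy
    · intro v hv
      rcases hdom.2.1 v hv with ⟨hn, h⟩ | ⟨u, hu, hadj⟩ | ⟨u, hu, hadj⟩
      · exact absurd hn hr
      · exact ⟨u, hu, hadj⟩
      · exact hadj.elim
    · intro x hx y hy; exact (hind.2.2 x hx).2.2 y hy
    · intro v hv
      rcases hdom.2.2 v hv with ⟨hn, h⟩ | ⟨u, hu, hadj⟩ | ⟨u, hu, hadj⟩
      · exact absurd hn hr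
      · exact hadj.elim
      · exact ⟨u, hu, hadj⟩
    · rcases hdom.1 hr with ⟨hn, h⟩ | ⟨u, hu, hadj⟩ | ⟨u, hu, hadj⟩
      · exact absurd hn hr
      · exact Or.inl (hadj ▸ hu)
      · exact Or.inr (hadj ▸ hu)
  · rintro ⟨hr, ⟨hind1, hdom1⟩, ⟨hind2, hdom2⟩, hroot⟩
    refine ⟨⟨⟨?_, ?_, ?_⟩, ?_, ?_, ?_⟩, hr⟩
    · intro hn; exact absurd hn hr
    · intro x hx
      exact ⟨fun hn => absurd hn hr, fun y hy => hind1 x hx y hy, fun y hy => id⟩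
    · intro y hy
      exact ⟨fun hn => absurd hn hr, fun x hx => id, fun y' hy' => hind2 y hy y' hy'⟩
    · intro _
      rcases hroot with h | h
      · exact Or.inr (Or.inl ⟨a, h, rfl⟩)
      · exact Or.inr (Or.inr ⟨b, h, rfl⟩)
    · intro x hx
      rcases hdom1 x hx with ⟨u, hu, hadj⟩
      exact Or.inr (Or.inl ⟨u, hu, hadj⟩)
    · intro y hy
      rcases hdom2 y hy with ⟨u, hu, hadj⟩
      exact Or.inr (Or.inr ⟨u, hu, hadj⟩)

lemma mem_Dset_iff (S : Finset (Option (α ⊕ β))) :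
    S ∈ Dset (rootJoin G H a b) none ↔
      none ∉ S ∧ p₁ S ∈ MISset G ∧ p₂ S ∈ MISset H := by
  simp only [Dset, MISset, SimpleGraph.IsIndepSet', Set.mem_setOf_eq,
    Option.forall, Option.exists, Sum.forall, Sum.exists, mem_p₁, mem_p₂,
    rj_nn, rj_nl, rj_nr, rj_ln, rj_rn, rj_ll, rj_rr, rj_lr, rj_rl]
  constructor
  · rintro ⟨hind, hr, hdom⟩
    refine ⟨hr, ⟨?_, ?_⟩, ⟨?_, ?_⟩⟩
    · intro x hx y hy; exact (hind.2.1 x hx).2.1 y hy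
    · intro v hv
      rcases hdom.2.1 v hv (Option.some_ne_none _) with ⟨hn, h⟩ | ⟨u, hu, hadj⟩ | ⟨u, hu, hadj⟩
      · exact absurd hn hr
      · exact ⟨u, hu, hadj⟩
      · exact hadj.elim
    · intro x hx y hy; exact (hind.2.2 x hx).2.2 y hy
    · intro v hv
      rcases hdom.2.2 v hv (Option.some_ne_none _) with ⟨hn, h⟩ | ⟨u, hu, hadj⟩ | ⟨u, hu, hadj⟩
      · exact absurd hn hr
      · exact hadj.elim
      · exact ⟨u, hu, hadj⟩
  · rintro ⟨hr, ⟨hind1, hdom1⟩, ⟨hind2, hdom2⟩⟩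
    refine ⟨⟨?_, ?_, ?_⟩, hr, ?_, ?_, ?_⟩
    · intro hn; exact absurd hn hr
    · intro x hx
      exact ⟨fun hn => absurd hn hr, fun y hy => hind1 x hx y hy, fun y hy => id⟩
    · intro y hy
      exact ⟨fun hn => absurd hn hr, fun x hx => id, fun y' hy' => hind2 y hy y' hy'⟩
    · intro h h'; exact absurd rfl h'
    · intro x hx _
      rcases hdom1 x hx with ⟨u, hu, hadj⟩
      exact Or.inr (Or.inl ⟨u, hu, hadj⟩)
    · intro y hy _
      rcases hdom2 y hy with ⟨u, hu, hadj⟩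
      exact Or.inr (Or.inr ⟨u, hu, hadj⟩)
end join2

lemma ncard_bool_prod {γ δ : Type*} (bb : Bool) (s : Set γ) (t : Set δ) :
    {x : Bool × γ × δ | x.1 = bb ∧ x.2.1 ∈ s ∧ x.2.2 ∈ t}.ncard = s.ncard * t.ncard := by
  rw [← Nat.card_coe_set_eq, ← Nat.card_coe_set_eq, ← Nat.card_coe_set_eq,
    ← Nat.card_prod]
  exact Nat.card_congr
    { toFun := fun x => (⟨x.1.2.1, x.2.2.1⟩, ⟨x.1.2.2, x.2.2.2⟩)
      invFun := fun p => ⟨(bb, p.1.1, p.2.1), rfl, p.1.2, p.2.2⟩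
      left_inv := by rintro ⟨⟨b', x, y⟩, rfl, hx, hy⟩; rfl
      right_inv := by rintro ⟨⟨x, hx⟩, ⟨y, hy⟩⟩; rfl }

section join3
variable {α β : Type*} [DecidableEq α] [DecidableEq β]

noncomputable def Esplit : Finset (Option (α ⊕ β)) ≃ Bool × Finset α × Finset β where
  toFun S := (decide (none ∈ S), p₁ S, p₂ S)
  invFun p := (p.2.1.map ⟨fun x => some (.inl x), (Option.some_injective _).comp Sum.inl_injective⟩ ∪
      p.2.2.map ⟨fun y => some (.inr y), (Option.some_injective _).comp Sum.inr_injective⟩) ∪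
      (if p.1 then {none} else ∅)
  left_inv := by
    intro S
    ext v
    rcases v with _ | x | y <;>
      simp [Finset.mem_union, Finset.mem_map] <;>
      by_cases h : none ∈ S <;> simp [h]
  right_inv := by
    rintro ⟨r, S₁, S₂⟩
    refine Prod.ext ?_ (Prod.ext ?_ ?_)
    · rcases r <;> simp
    · ext x; rcases r <;> simp
    · ext y; rcases r <;> simp

@[simp] lemma Esplit_fst (S : Finset (Option (α ⊕ β))) :
    (Esplit S).1 = decide (none ∈ S) := rfl
@[simp] lemma Esplit_snd (S : Finset (Option (α ⊕ β))) : (Esplit S).2.1 = p₁ S := rfl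
@[simp] lemma Esplit_trd (S : Finset (Option (α ⊕ β))) : (Esplit S).2.2 = p₂ S := rfl

variable [Fintype α] [Fintype β]
variable (G : SimpleGraph α) (H : SimpleGraph β) (a : α) (b : β)

lemma ncard_Aset_join :
    (Aset (rootJoin G H a b) none).ncard = (Dset G a).ncard * (Dset H b).ncard := by
  rw [← ncard_bool_prod true (Dset G a) (Dset H b)]
  apply ncard_congr_equiv (Esplit (α := α) (β := β))
  intro S
  rw [mem_Aset_iff]
  simp [Set.mem_setOf_eq]

lemma ncard_Dset_join :
    (Dset (rootJoin G H a b) none).ncard = (MISset G).ncard * (MISset H).ncard := by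
  rw [← ncard_bool_prod false (MISset G) (MISset H)]
  apply ncard_congr_equiv (Esplit (α := α) (β := β))
  intro S
  rw [mem_Dset_iff]
  simp [Set.mem_setOf_eq]

lemma ncard_Bset_join :
    (Bset (rootJoin G H a b) none).ncard + (Bset G a).ncard * (Bset H b).ncard =
      (MISset G).ncard * (MISset H).ncard := by
  rw [← ncard_bool_prod false (MISset G) (MISset H)]
  have h1 : (Bset (rootJoin G H a b) none).ncard =
      {x : Bool × Finset α × Finset β | x.1 = false ∧ x.2.1 ∈ MISset G ∧ x.2.2 ∈ MISset H ∧
        (a ∈ x.2.1 ∨ b ∈ x.2.2)}.ncard := by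
    apply ncard_congr_equiv (Esplit (α := α) (β := β))
    intro S
    rw [mem_Bset_iff]
    simp [Set.mem_setOf_eq]
  have h2 : (Bset G a).ncard * (Bset H b).ncard =
      {x : Bool × Finset α × Finset β | x.1 = false ∧ x.2.1 ∈ Bset G a ∧ x.2.2 ∈ Bset H b}.ncard :=
    (ncard_bool_prod false _ _).symm
  rw [h1, h2, ← Set.ncard_union_eq ?disj (Set.toFinite _) (Set.toFinite _)]
  · congr 1
    ext ⟨r, S₁, S₂⟩
    simp only [Set.mem_union, Set.mem_setOf_eq, Bset]
    constructor
    · rintro (⟨hr, h1, h2, h3⟩ | ⟨hr, ⟨h1, _⟩, ⟨h2, _⟩⟩) <;> exact ⟨hr, h1, h2⟩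
    · rintro ⟨hr, h1, h2⟩
      by_cases hm : a ∈ S₁ ∨ b ∈ S₂
      · exact Or.inl ⟨hr, h1, h2, hm⟩
      · push_neg at hm
        exact Or.inr ⟨hr, ⟨h1, hm.1⟩, ⟨h2, hm.2⟩⟩
  case disj =>
    rw [Set.disjoint_left]
    rintro ⟨r, S₁, S₂⟩ ⟨_, _, _, hm⟩ ⟨_, ⟨_, ha⟩, ⟨_, hb⟩⟩
    rcases hm with h | h
    · exact ha h
    · exact hb h

lemma ncard_MISset_join :
    (MISset (rootJoin G H a b)).ncard =
      (Aset (rootJoin G H a b) none).ncard + (Bset (rootJoin G H a b) none).ncard := by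
  rw [← Set.ncard_union_eq ?disj (Set.toFinite _) (Set.toFinite _)]
  · congr 1
    ext S
    simp only [Set.mem_union, Aset, Bset, Set.mem_setOf_eq]
    tauto
  case disj =>
    rw [Set.disjoint_left]
    rintro S ⟨_, h⟩ ⟨_, h'⟩
    exact h' h
end join3

section transfer
variable {γ δ : Type*} [DecidableEq γ] [DecidableEq δ]
variable {G : SimpleGraph γ} {H : SimpleGraph δ}

lemma map_mem_MISset (φ : G ≃g H) {S : Finset γ} (h : S ∈ MISset G) :
    S.map φ.toEquiv.toEmbedding ∈ MISset H := by
  obtain ⟨hind, hdom⟩ := h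
  constructor
  · rintro u hu v hv hadj
    simp only [Finset.mem_map, Equiv.coe_toEmbedding] at hu hv
    obtain ⟨x, hx, rfl⟩ := hu
    obtain ⟨y, hy, rfl⟩ := hv
    exact hind x hx y hy (φ.map_adj_iff.1 hadj)
  · intro v hv
    obtain ⟨w, rfl⟩ := φ.toEquiv.surjective v
    have hw : w ∉ S := fun hw => hv (Finset.mem_map_of_mem _ hw)
    obtain ⟨u, hu, hadj⟩ := hdom w hw
    exact ⟨φ u, Finset.mem_map_of_mem _ hu, φ.map_adj_iff.2 hadj⟩

lemma mem_MISset_map_iff (φ : G ≃g H) (S : Finset γ) :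
    S.map φ.toEquiv.toEmbedding ∈ MISset H ↔ S ∈ MISset G := by
  refine ⟨fun h => ?_, map_mem_MISset φ⟩
  have := map_mem_MISset φ.symm h
  have he : (S.map φ.toEquiv.toEmbedding).map φ.symm.toEquiv.toEmbedding = S := by
    ext v
    simp only [Finset.mem_map, Equiv.coe_toEmbedding]
    constructor
    · rintro ⟨x, ⟨y, hy, rfl⟩, rfl⟩
      simpa using hy
    · intro hv
      exact ⟨φ v, ⟨v, hv, rfl⟩, by simp⟩
  rwa [he] at this

lemma root_mem_map_iff (φ : G ≃g H) (S : Finset γ) (r : γ) :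
    φ r ∈ S.map φ.toEquiv.toEmbedding ↔ r ∈ S := by
  simp only [Finset.mem_map, Equiv.coe_toEmbedding]
  constructor
  · rintro ⟨x, hx, hxe⟩
    rwa [← φ.toEquiv.injective hxe]
  · intro h; exact ⟨r, h, rfl⟩

lemma ncard_MISset_iso (φ : G ≃g H) : (MISset G).ncard = (MISset H).ncard := by
  apply ncard_congr_equiv φ.toEquiv.finsetCongr
  intro S
  rw [Equiv.finsetCongr_apply, mem_MISset_map_iff]

lemma ncard_Bset_iso (φ : G ≃g H) (r : γ) : (Bset G r).ncard = (Bset H (φ r)).ncard := by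
  apply ncard_congr_equiv φ.toEquiv.finsetCongr
  intro S
  rw [Equiv.finsetCongr_apply]
  unfold Bset
  rw [Set.mem_setOf_eq, Set.mem_setOf_eq, mem_MISset_map_iff, root_mem_map_iff]

lemma mem_Dset_map_iff (φ : G ≃g H) (S : Finset γ) (r : γ) :
    S.map φ.toEquiv.toEmbedding ∈ Dset H (φ r) ↔ S ∈ Dset G r := by
  constructor
  · rintro ⟨hind, hr, hdom⟩
    refine ⟨?_, ?_, ?_⟩
    · intro x hx y hy hadj
      exact hind (φ x) (Finset.mem_map_of_mem _ hx) (φ y) (Finset.mem_map_of_mem _ hy)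
        (φ.map_adj_iff.2 hadj)
    · rwa [root_mem_map_iff] at hr
    · intro v hv hvr
      have : φ v ∉ S.map φ.toEquiv.toEmbedding := by rwa [root_mem_map_iff]
      obtain ⟨u, hu, hadj⟩ := hdom (φ v) this (fun hc => hvr (φ.toEquiv.injective hc))
      simp only [Finset.mem_map, Equiv.coe_toEmbedding] at hu
      obtain ⟨x, hx, rfl⟩ := hu
      exact ⟨x, hx, φ.map_adj_iff.1 hadj⟩
  · rintro ⟨hind, hr, hdom⟩
    refine ⟨?_, ?_, ?_⟩
    · rintro u hu v hv hadj
      simp only [Finset.mem_map, Equiv.coe_toEmbedding] at hu hv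
      obtain ⟨x, hx, rfl⟩ := hu
      obtain ⟨y, hy, rfl⟩ := hv
      exact hind x hx y hy (φ.map_adj_iff.1 hadj)
    · rwa [root_mem_map_iff]
    · intro v hv hvr
      obtain ⟨w, rfl⟩ := φ.toEquiv.surjective v
      have hw : w ∉ S := fun hw => hv (Finset.mem_map_of_mem _ hw)
      obtain ⟨u, hu, hadj⟩ := hdom w hw (fun hc => hvr (by rw [hc]; rfl))
      exact ⟨φ u, Finset.mem_map_of_mem _ hu, φ.map_adj_iff.2 hadj⟩

lemma ncard_Dset_iso (φ : G ≃g H) (r : γ) : (Dset G r).ncard = (Dset H (φ r)).ncard := by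
  apply ncard_congr_equiv φ.toEquiv.finsetCongr
  intro S
  rw [Equiv.finsetCongr_apply, mem_Dset_map_iff]
end transfer

namespace PBTaux

def Lnat (v : ℕ) : ℕ := v + 2 ^ Nat.log 2 (v + 1)
def Rnat (v : ℕ) : ℕ := v + 2 ^ (Nat.log 2 (v + 1) + 1)

lemma two_pow_log_le (v : ℕ) : 2 ^ Nat.log 2 (v + 1) ≤ v + 1 :=
  Nat.pow_log_le_self 2 (Nat.succ_ne_zero v)

lemma lt_two_pow_log (v : ℕ) : v + 1 < 2 ^ (Nat.log 2 (v + 1) + 1) :=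
  Nat.lt_pow_succ_log_self one_lt_two _

lemma log_eq_of {m n : ℕ} (h1 : 2 ^ m ≤ n) (h2 : n < 2 ^ (m + 1)) : Nat.log 2 n = m :=
  Nat.log_eq_of_pow_le_of_lt_pow h1 h2

lemma log_double {m : ℕ} (hm : 1 ≤ m) : Nat.log 2 (2 * m) = Nat.log 2 m + 1 := by
  rw [mul_comm]
  exact Nat.log_mul_base one_lt_two (by omega)

lemma log_double_succ {m : ℕ} (hm : 1 ≤ m) : Nat.log 2 (2 * m + 1) = Nat.log 2 m + 1 := by
  have h1 := Nat.pow_log_le_self 2 (show m ≠ 0 by omega)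
  have h2 := Nat.lt_pow_succ_log_self one_lt_two m
  apply log_eq_of
  · rw [pow_succ]; omega
  · rw [pow_succ, pow_succ] at *; omega

lemma log_Lnat (v : ℕ) : Nat.log 2 (Lnat v + 1) = Nat.log 2 (v + 1) + 1 := by
  have h1 := two_pow_log_le v
  have h2 := lt_two_pow_log v
  apply log_eq_of
  · rw [pow_succ]; unfold Lnat; omega
  · rw [pow_succ, pow_succ] at *; unfold Lnat; omega

lemma log_Rnat (v : ℕ) : Nat.log 2 (Rnat v + 1) = Nat.log 2 (v + 1) + 1 := by
  have h1 := two_pow_log_le v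
  have h2 := lt_two_pow_log v
  apply log_eq_of
  · rw [pow_succ] at *; unfold Rnat; omega
  · rw [pow_succ, pow_succ] at *; unfold Rnat; omega

-- key: Lnat v + 1 < 3 * 2^(log2 (v+1)),  Rnat v + 1 ≥ 3 * 2^(log2 (v+1))
lemma Lnat_ub (v : ℕ) : Lnat v + 1 < 3 * 2 ^ Nat.log 2 (v + 1) := by
  have h2 := lt_two_pow_log v
  rw [pow_succ] at h2
  unfold Lnat; omega

lemma Rnat_lb (v : ℕ) : 3 * 2 ^ Nat.log 2 (v + 1) ≤ Rnat v + 1 := by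
  have h1 := two_pow_log_le v
  unfold Rnat; rw [pow_succ]; omega

lemma L_child1_iff (x y : ℕ) : Lnat y = 2 * Lnat x + 1 ↔ y = 2 * x + 1 := by
  constructor
  · intro h
    have hlog : Nat.log 2 (Lnat y + 1) = Nat.log 2 (2 * (Lnat x + 1)) := by rw [h]; ring_nf
    rw [log_Lnat, log_double (by omega), log_Lnat] at hlog
    unfold Lnat at h
    rw [show Nat.log 2 (y+1) = Nat.log 2 (x+1) + 1 by omega, pow_succ] at h
    omega
  · rintro rfl
    unfold Lnat
    rw [show 2*x+1+1 = 2*(x+1) by ring, log_double (by omega), pow_succ]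
    ring

lemma L_child2_iff (x y : ℕ) : Lnat y = 2 * Lnat x + 2 ↔ y = 2 * x + 2 := by
  constructor
  · intro h
    have hlog : Nat.log 2 (Lnat y + 1) = Nat.log 2 (2 * (Lnat x + 1) + 1) := by rw [h]; ring_nf
    rw [log_Lnat, log_double_succ (by omega), log_Lnat] at hlog
    unfold Lnat at h
    rw [show Nat.log 2 (y+1) = Nat.log 2 (x+1) + 1 by omega, pow_succ] at h
    omega
  · rintro rfl
    unfold Lnat
    rw [show 2*x+2+1 = 2*(x+1)+1 by ring, log_double_succ (by omega), pow_succ]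
    ring

lemma R_child1_iff (x y : ℕ) : Rnat y = 2 * Rnat x + 1 ↔ y = 2 * x + 1 := by
  constructor
  · intro h
    have hlog : Nat.log 2 (Rnat y + 1) = Nat.log 2 (2 * (Rnat x + 1)) := by rw [h]; ring_nf
    rw [log_Rnat, log_double (by omega), log_Rnat] at hlog
    unfold Rnat at h
    rw [show Nat.log 2 (y+1) = Nat.log 2 (x+1) + 1 by omega, pow_succ] at h
    omega
  · rintro rfl
    unfold Rnat
    rw [show 2*x+1+1 = 2*(x+1) by ring, log_double (by omega), pow_succ, pow_succ]
    ring

lemma R_child2_iff (x y : ℕ) : Rnat y = 2 * Rnat x + 2 ↔ y = 2 * x + 2 := by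
  constructor
  · intro h
    have hlog : Nat.log 2 (Rnat y + 1) = Nat.log 2 (2 * (Rnat x + 1) + 1) := by rw [h]; ring_nf
    rw [log_Rnat, log_double_succ (by omega), log_Rnat] at hlog
    unfold Rnat at h
    rw [show Nat.log 2 (y+1) = Nat.log 2 (x+1) + 1 by omega, pow_succ] at h
    omega
  · rintro rfl
    unfold Rnat
    rw [show 2*x+2+1 = 2*(x+1)+1 by ring, log_double_succ (by omega), pow_succ, pow_succ]
    ring

lemma R_ne_2L1 (x y : ℕ) : Rnat y ≠ 2 * Lnat x + 1 := by
  intro h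
  have hlog : Nat.log 2 (Rnat y + 1) = Nat.log 2 (2 * (Lnat x + 1)) := by rw [h]; ring_nf
  rw [log_Rnat, log_double (by omega), log_Lnat] at hlog
  have h1 := Rnat_lb y
  have h2 := Lnat_ub x
  rw [show Nat.log 2 (y+1) = Nat.log 2 (x+1) + 1 by omega, pow_succ] at h1
  omega

lemma R_ne_2L2 (x y : ℕ) : Rnat y ≠ 2 * Lnat x + 2 := by
  intro h
  have hlog : Nat.log 2 (Rnat y + 1) = Nat.log 2 (2 * (Lnat x + 1) + 1) := by rw [h]; ring_nf
  rw [log_Rnat, log_double_succ (by omega), log_Lnat] at hlog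
  have h1 := Rnat_lb y
  have h2 := Lnat_ub x
  rw [show Nat.log 2 (y+1) = Nat.log 2 (x+1) + 1 by omega, pow_succ] at h1
  omega

lemma L_ne_2R1 (x y : ℕ) : Lnat y ≠ 2 * Rnat x + 1 := by
  intro h
  have hlog : Nat.log 2 (Lnat y + 1) = Nat.log 2 (2 * (Rnat x + 1)) := by rw [h]; ring_nf
  rw [log_Lnat, log_double (by omega), log_Rnat] at hlog
  have h1 := Lnat_ub y
  have h2 := Rnat_lb x
  rw [show Nat.log 2 (y+1) = Nat.log 2 (x+1) + 1 by omega, pow_succ] at h1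
  omega

lemma L_ne_2R2 (x y : ℕ) : Lnat y ≠ 2 * Rnat x + 2 := by
  intro h
  have hlog : Nat.log 2 (Lnat y + 1) = Nat.log 2 (2 * (Rnat x + 1) + 1) := by rw [h]; ring_nf
  rw [log_Lnat, log_double_succ (by omega), log_Rnat] at hlog
  have h1 := Lnat_ub y
  have h2 := Rnat_lb x
  rw [show Nat.log 2 (y+1) = Nat.log 2 (x+1) + 1 by omega, pow_succ] at h1
  omega

lemma log_ge_one {x : ℕ} (hx : 1 ≤ x) : 1 ≤ Nat.log 2 (x + 1) := by
  have h2 : Nat.log 2 2 = 1 := log_eq_of (by norm_num) (by norm_num)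
  have := Nat.log_mono_right (b := 2) (show 2 ≤ x + 1 by omega)
  omega

lemma Lnat_eq_one_iff (x : ℕ) : Lnat x = 1 ↔ x = 0 := by
  constructor
  · intro h
    by_contra hx
    have h1 := log_ge_one (show 1 ≤ x by omega)
    have : (2:ℕ) ≤ 2 ^ Nat.log 2 (x+1) := by
      calc (2:ℕ) = 2^1 := rfl
      _ ≤ _ := Nat.pow_le_pow_right (by norm_num) h1
    unfold Lnat at h; omega
  · rintro rfl; simp [Lnat]

lemma Lnat_ne_two (x : ℕ) : Lnat x ≠ 2 := by
  intro h
  rcases Nat.eq_zero_or_pos x with rfl | hx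
  · simp [Lnat] at h
  · have h1 := log_ge_one hx
    have h2 : (2:ℕ) ≤ 2 ^ Nat.log 2 (x+1) := by
      calc (2:ℕ) = 2^1 := rfl
      _ ≤ _ := Nat.pow_le_pow_right (by norm_num) h1
    unfold Lnat at h; omega

lemma Rnat_eq_two_iff (x : ℕ) : Rnat x = 2 ↔ x = 0 := by
  constructor
  · intro h
    by_contra hx
    have h1 := log_ge_one (show 1 ≤ x by omega)
    have h2 : (4:ℕ) ≤ 2 ^ (Nat.log 2 (x+1) + 1) := by
      calc (4:ℕ) = 2^2 := rfl
      _ ≤ _ := Nat.pow_le_pow_right (by norm_num) (by omega)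
    unfold Rnat at h; omega
  · rintro rfl; simp [Rnat]

lemma Rnat_ne_one (x : ℕ) : Rnat x ≠ 1 := by
  intro h
  rcases Nat.eq_zero_or_pos x with rfl | hx
  · simp [Rnat] at h
  · have h2 : (4:ℕ) ≤ 2 ^ (Nat.log 2 (x+1) + 1) := by
      calc (4:ℕ) = 2^2 := rfl
      _ ≤ _ := Nat.pow_le_pow_right (by norm_num) (by have := log_ge_one hx; omega)
    unfold Rnat at h; omega

lemma Lnat_pos (x : ℕ) : 1 ≤ Lnat x := by
  have : 0 < 2 ^ Nat.log 2 (x+1) := pow_pos (by norm_num) _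
  unfold Lnat; omega
lemma Rnat_pos (x : ℕ) : 1 ≤ Rnat x := by
  have : 0 < 2 ^ (Nat.log 2 (x+1) + 1) := pow_pos (by norm_num) _
  unfold Rnat; omega

lemma L_inj {x y : ℕ} (h : Lnat x = Lnat y) : x = y := by
  have hlog : Nat.log 2 (Lnat x + 1) = Nat.log 2 (Lnat y + 1) := by rw [h]
  rw [log_Lnat, log_Lnat] at hlog
  unfold Lnat at h
  rw [show Nat.log 2 (x+1) = Nat.log 2 (y+1) by omega] at h
  omega

lemma R_inj {x y : ℕ} (h : Rnat x = Rnat y) : x = y := by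
  have hlog : Nat.log 2 (Rnat x + 1) = Nat.log 2 (Rnat y + 1) := by rw [h]
  rw [log_Rnat, log_Rnat] at hlog
  unfold Rnat at h
  rw [show Nat.log 2 (x+1) + 1 = Nat.log 2 (y+1) + 1 by omega] at h
  omega

lemma L_ne_R (x y : ℕ) : Lnat x ≠ Rnat y := by
  intro h
  have hlog : Nat.log 2 (Lnat x + 1) = Nat.log 2 (Rnat y + 1) := by rw [h]
  rw [log_Lnat, log_Rnat] at hlog
  have h1 := Lnat_ub x
  have h2 := Rnat_lb y
  rw [show Nat.log 2 (y+1) = Nat.log 2 (x+1) by omega] at h2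
  omega

lemma log_le_of_lt {h v : ℕ} (hv : v < 2 ^ (h + 1) - 1) : Nat.log 2 (v + 1) ≤ h := by
  have h0 : (0:ℕ) < 2 ^ (h+1) := pow_pos (by norm_num) _
  have := Nat.log_lt_of_lt_pow (show v + 1 ≠ 0 by omega) (show v + 1 < 2 ^ (h+1) by omega)
  omega

lemma Lnat_lt {h v : ℕ} (hv : v < 2 ^ (h + 1) - 1) : Lnat v < 2 ^ (h + 2) - 1 := by
  have hk := log_le_of_lt hv
  have hle : 2 ^ Nat.log 2 (v+1) ≤ 2 ^ h := Nat.pow_le_pow_right (by norm_num) hk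
  have e1 : (2:ℕ) ^ (h+1) = 2 * 2 ^ h := by rw [pow_succ]; ring
  have e2 : (2:ℕ) ^ (h+2) = 4 * 2 ^ h := by rw [pow_succ, pow_succ]; ring
  have h0 : (0:ℕ) < 2 ^ h := pow_pos (by norm_num) _
  unfold Lnat; omega

lemma Rnat_lt {h v : ℕ} (hv : v < 2 ^ (h + 1) - 1) : Rnat v < 2 ^ (h + 2) - 1 := by
  have hk := log_le_of_lt hv
  have hle : 2 ^ (Nat.log 2 (v+1) + 1) ≤ 2 ^ (h+1) :=
    Nat.pow_le_pow_right (by norm_num) (by omega)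
  have e1 : (2:ℕ) ^ (h+1) = 2 * 2 ^ h := by rw [pow_succ]; ring
  have e2 : (2:ℕ) ^ (h+2) = 4 * 2 ^ h := by rw [pow_succ, pow_succ]; ring
  have h0 : (0:ℕ) < 2 ^ h := pow_pos (by norm_num) _
  unfold Rnat; omega

end PBTaux

open PBTaux

lemma pbt_adj {h : ℕ} (u v : Fin (2 ^ (h + 1) - 1)) :
    (perfectBinaryTree h).Adj u v ↔
      ((v : ℕ) = 2 * u + 1 ∨ (v : ℕ) = 2 * u + 2 ∨ (u : ℕ) = 2 * v + 1 ∨ (u : ℕ) = 2 * v + 2) := by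
  rw [perfectBinaryTree, SimpleGraph.fromRel_adj]
  constructor
  · rintro ⟨hne, h⟩; tauto
  · intro hrel
    refine ⟨?_, by tauto⟩
    rintro rfl
    rcases hrel with h | h | h | h <;> omega

lemma npos (h : ℕ) : 0 < 2 ^ (h + 1) - 1 := by
  have : (2:ℕ) ^ (h+1) = 2 * 2 ^ h := by rw [pow_succ]; ring
  have h0 : (0:ℕ) < 2 ^ h := pow_pos (by norm_num) _
  omega

def treeFun (h : ℕ) : Option (Fin (2 ^ (h + 1) - 1) ⊕ Fin (2 ^ (h + 1) - 1)) →
    Fin (2 ^ (h + 2) - 1)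
  | none => ⟨0, npos (h + 1)⟩
  | some (.inl v) => ⟨Lnat v, Lnat_lt v.2⟩
  | some (.inr v) => ⟨Rnat v, Rnat_lt v.2⟩

lemma Lnat_ne_zero (x : ℕ) : Lnat x ≠ 0 := by have := Lnat_pos x; omega
lemma Rnat_ne_zero (x : ℕ) : Rnat x ≠ 0 := by have := Rnat_pos x; omega

lemma treeFun_injective (h : ℕ) : Function.Injective (treeFun h) := by
  rintro (_ | x | y) (_ | x' | y') hxy <;>
    simp only [treeFun, Fin.mk.injEq] at hxy ⊢ <;>
    first
    | rfl
    | exact congrArg (fun t => some (Sum.inl t)) (Fin.ext (L_inj hxy))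
    | exact congrArg (fun t => some (Sum.inr t)) (Fin.ext (R_inj hxy))
    | exact absurd hxy (L_ne_R _ _)
    | exact absurd hxy.symm (L_ne_R _ _)
    | exact absurd hxy (Lnat_ne_zero _)
    | exact absurd hxy.symm (Lnat_ne_zero _)
    | exact absurd hxy (Rnat_ne_zero _)
    | exact absurd hxy.symm (Rnat_ne_zero _)

lemma card_eq (h : ℕ) :
    Fintype.card (Option (Fin (2 ^ (h + 1) - 1) ⊕ Fin (2 ^ (h + 1) - 1))) =
      Fintype.card (Fin (2 ^ (h + 2) - 1)) := by
  simp [Fintype.card_option, Fintype.card_sum]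
  have e1 : (2:ℕ) ^ (h+2) = 2 * 2 ^ (h+1) := by ring
  have h0 : (0:ℕ) < 2 ^ (h+1) := pow_pos (by norm_num) _
  omega

noncomputable def treeEquiv (h : ℕ) :
    Option (Fin (2 ^ (h + 1) - 1) ⊕ Fin (2 ^ (h + 1) - 1)) ≃ Fin (2 ^ (h + 2) - 1) :=
  Equiv.ofBijective (treeFun h)
    ((Fintype.bijective_iff_injective_and_card _).2 ⟨treeFun_injective h, card_eq h⟩)

def r0 (h : ℕ) : Fin (2 ^ (h + 1) - 1) := ⟨0, npos h⟩

lemma Lnat_zero : Lnat 0 = 1 := by simp [Lnat]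
lemma Rnat_zero : Rnat 0 = 2 := by simp [Rnat]

noncomputable def treeIso (h : ℕ) :
    rootJoin (perfectBinaryTree h) (perfectBinaryTree h) (r0 h) (r0 h) ≃g
      perfectBinaryTree (h + 1) where
  toEquiv := treeEquiv h
  map_rel_iff' := by
    intro x y
    show (perfectBinaryTree (h+1)).Adj (treeFun h x) (treeFun h y) ↔ _
    rcases x with _ | x | x <;> rcases y with _ | y | y <;> rw [pbt_adj]
    · -- none none
      show _ ↔ False
      simp [treeFun]
    · -- none, inl y
      show _ ↔ y = r0 h
      simp only [treeFun]
      constructor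
      · rintro (h1 | h1 | h1 | h1)
        · exact Fin.ext (by simpa [r0] using (Lnat_eq_one_iff _).1 (by simpa using h1))
        · exact absurd (by simpa using h1) (Lnat_ne_two _)
        · omega
        · omega
      · rintro rfl
        left
        show Lnat ((r0 h : Fin _) : ℕ) = 2 * 0 + 1
        simp [r0, Lnat_zero]
    · -- none, inr y
      show _ ↔ y = r0 h
      simp only [treeFun]
      constructor
      · rintro (h1 | h1 | h1 | h1)
        · exact absurd (by simpa using h1) (Rnat_ne_one _)
        · exact Fin.ext (by simpa [r0] using (Rnat_eq_two_iff _).1 (by simpa using h1))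
        · omega
        · omega
      · rintro rfl
        right; left
        show Rnat ((r0 h : Fin _) : ℕ) = 2 * 0 + 2
        simp [r0, Rnat_zero]
    · -- inl x, none
      show _ ↔ x = r0 h
      simp only [treeFun]
      constructor
      · rintro (h1 | h1 | h1 | h1)
        · omega
        · omega
        · exact Fin.ext (by simpa [r0] using (Lnat_eq_one_iff _).1 (by simpa using h1))
        · exact absurd (by simpa using h1) (Lnat_ne_two _)
      · rintro rfl
        right; right; left
        show Lnat ((r0 h : Fin _) : ℕ) = 2 * 0 + 1
        simp [r0, Lnat_zero]
    · -- inl inl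
      show _ ↔ (perfectBinaryTree h).Adj x y
      rw [pbt_adj]
      simp only [treeFun, L_child1_iff, L_child2_iff]
    · -- inl x, inr y
      show _ ↔ False
      simp only [treeFun, iff_false]
      rintro (h1 | h1 | h1 | h1)
      exacts [R_ne_2L1 _ _ h1, R_ne_2L2 _ _ h1, L_ne_2R1 _ _ h1, L_ne_2R2 _ _ h1]
    · -- inr x, none
      show _ ↔ x = r0 h
      simp only [treeFun]
      constructor
      · rintro (h1 | h1 | h1 | h1)
        · omega
        · omega
        · exact absurd (by simpa using h1) (Rnat_ne_one _)
        · exact Fin.ext (by simpa [r0] using (Rnat_eq_two_iff _).1 (by simpa using h1))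
      · rintro rfl
        right; right; right
        show Rnat ((r0 h : Fin _) : ℕ) = 2 * 0 + 2
        simp [r0, Rnat_zero]
    · -- inr x, inl y
      show _ ↔ False
      simp only [treeFun, iff_false]
      rintro (h1 | h1 | h1 | h1)
      exacts [L_ne_2R1 _ _ h1, L_ne_2R2 _ _ h1, R_ne_2L1 _ _ h1, R_ne_2L2 _ _ h1]
    · -- inr inr
      show _ ↔ (perfectBinaryTree h).Adj x y
      rw [pbt_adj]
      simp only [treeFun, R_child1_iff, R_child2_iff]


section assembly

lemma fin1_eq (v : Fin (2 ^ (0 + 1) - 1)) : v = r0 0 := by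
  apply Fin.ext
  have hv := v.2
  norm_num at hv
  simp [r0, hv]

lemma adj0 (u v : Fin (2 ^ (0 + 1) - 1)) : ¬ (perfectBinaryTree 0).Adj u v := by
  intro hadj
  rw [pbt_adj] at hadj
  have hu := u.2
  have hv := v.2
  norm_num at hu hv
  rcases hadj with h | h | h | h <;> omega

lemma MISset0 : MISset (perfectBinaryTree 0) = {{r0 0}} := by
  ext S
  simp only [MISset, Set.mem_setOf_eq, Set.mem_singleton_iff]
  constructor
  · rintro ⟨hind, hdom⟩
    have hr : r0 0 ∈ S := by
      by_contra hr
      obtain ⟨u, _, hadj⟩ := hdom _ hr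
      exact adj0 u _ hadj
    ext v
    rw [Finset.mem_singleton]
    constructor
    · intro _; exact fin1_eq v
    · rintro rfl; exact hr
  · rintro rfl
    refine ⟨fun u _ v _ hadj => adj0 u v hadj, fun v hv => ?_⟩
    exact absurd (by rw [fin1_eq v]; exact Finset.mem_singleton_self _) hv

lemma Bset0 : Bset (perfectBinaryTree 0) (r0 0) = ∅ := by
  ext S
  simp only [Bset, Set.mem_setOf_eq, MISset0, Set.mem_singleton_iff,
    Set.mem_empty_iff_false, iff_false, not_and]
  rintro rfl
  exact fun hr => hr (Finset.mem_singleton_self _)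

lemma Dset0 : Dset (perfectBinaryTree 0) (r0 0) = {∅} := by
  ext S
  simp only [Dset, Set.mem_setOf_eq, Set.mem_singleton_iff]
  constructor
  · rintro ⟨hind, hr, hdom⟩
    rw [Finset.eq_empty_iff_forall_notMem]
    intro v hv
    rw [fin1_eq v] at hv
    exact hr hv
  · rintro rfl
    exact ⟨fun u hu => absurd hu (Finset.notMem_empty _), Finset.notMem_empty _,
      fun v hv hvr => absurd (fin1_eq v) hvr⟩

noncomputable def mseq (h : ℕ) : ℕ := (MISset (perfectBinaryTree h)).ncard
noncomputable def Bseq (h : ℕ) : ℕ := (Bset (perfectBinaryTree h) (r0 h)).ncard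
noncomputable def Dseq (h : ℕ) : ℕ := (Dset (perfectBinaryTree h) (r0 h)).ncard

lemma mseq0 : mseq 0 = 1 := by unfold mseq; rw [MISset0]; exact Set.ncard_singleton _
lemma Bseq0 : Bseq 0 = 0 := by unfold Bseq; rw [Bset0]; exact Set.ncard_empty _
lemma Dseq0 : Dseq 0 = 1 := by unfold Dseq; rw [Dset0]; exact Set.ncard_singleton _

lemma treeIso_none (h : ℕ) : (treeIso h) none = r0 (h + 1) := rfl

lemma mseq_succ (h : ℕ) : mseq (h + 1) = Dseq h * Dseq h + Bseq (h + 1) := by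
  have t1 := ncard_MISset_iso (treeIso h)
  have t2 := ncard_Bset_iso (treeIso h) none
  rw [treeIso_none] at t2
  unfold mseq Bseq Dseq
  rw [← t1, ← t2, ncard_MISset_join, ncard_Aset_join]

lemma Bseq_succ (h : ℕ) : Bseq (h + 1) + Bseq h * Bseq h = mseq h * mseq h := by
  have t2 := ncard_Bset_iso (treeIso h) none
  rw [treeIso_none] at t2
  unfold Bseq mseq
  rw [← t2]
  exact ncard_Bset_join _ _ _ _

lemma Dseq_succ (h : ℕ) : Dseq (h + 1) = mseq h * mseq h := by
  have t3 := ncard_Dset_iso (treeIso h) none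
  rw [treeIso_none] at t3
  unfold Dseq mseq
  rw [← t3]
  exact ncard_Dset_join _ _ _ _

lemma Bseq1 : Bseq 1 = 1 := by have := Bseq_succ 0; rw [Bseq0, mseq0] at this; norm_num at this; omega
lemma mseq1 : mseq 1 = 2 := by have := mseq_succ 0; rw [Dseq0] at this; norm_num at this; rw [Bseq1] at this; omega
lemma Dseq1 : Dseq 1 = 1 := by have := Dseq_succ 0; rw [mseq0] at this; norm_num at this; omega
lemma Bseq2 : Bseq 2 = 3 := by have := Bseq_succ 1; norm_num at this; rw [Bseq1, mseq1] at this; omega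
lemma mseq2 : mseq 2 = 4 := by have := mseq_succ 1; norm_num at this; rw [Dseq1, Bseq2] at this; omega

lemma numMinVC_eq_mseq (h : ℕ) :
    (perfectBinaryTree h).numMinimalVertexCovers = mseq h :=
  numMinVC_eq_ncard_MISset _

end assembly

/-- Recursive formula for the number of minimal vertex covers of perfect binary trees. -/
theorem numMinimalVertexCovers_perfectBinaryTree_recurrence :
    (perfectBinaryTree 0).numMinimalVertexCovers = 1 ∧
    (perfectBinaryTree 1).numMinimalVertexCovers = 2 ∧
    (perfectBinaryTree 2).numMinimalVertexCovers = 4 ∧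
    ∀ h : ℕ, 2 ≤ h →
      ((perfectBinaryTree (h + 1)).numMinimalVertexCovers : ℤ) =
        2 * ((perfectBinaryTree h).numMinimalVertexCovers : ℤ) *
            ((perfectBinaryTree (h - 2)).numMinimalVertexCovers : ℤ) ^ 4 +
          ((perfectBinaryTree (h - 1)).numMinimalVertexCovers : ℤ) ^ 4 -
          ((perfectBinaryTree (h - 2)).numMinimalVertexCovers : ℤ) ^ 8 := by
  refine ⟨by rw [numMinVC_eq_mseq, mseq0], by rw [numMinVC_eq_mseq, mseq1],
    by rw [numMinVC_eq_mseq, mseq2], ?_⟩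
  intro h hh
  obtain ⟨k, rfl⟩ : ∃ k, h = k + 2 := ⟨h - 2, by omega⟩
  simp only [numMinVC_eq_mseq, show k + 2 - 2 = k from by omega,
    show k + 2 - 1 = k + 1 from by omega, show k + 2 + 1 = k + 3 from by omega]
  have H1 : (mseq (k + 3) : ℤ) = (Dseq (k + 2) : ℤ) * Dseq (k + 2) + Bseq (k + 3) := by
    exact_mod_cast congrArg (Nat.cast (R := ℤ)) (mseq_succ (k + 2))
  have H2 : (Bseq (k + 3) : ℤ) + (Bseq (k + 2) : ℤ) * Bseq (k + 2) =
      (mseq (k + 2) : ℤ) * mseq (k + 2) := by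
    exact_mod_cast congrArg (Nat.cast (R := ℤ)) (Bseq_succ (k + 2))
  have H3 : (Dseq (k + 2) : ℤ) = (mseq (k + 1) : ℤ) * mseq (k + 1) := by
    exact_mod_cast congrArg (Nat.cast (R := ℤ)) (Dseq_succ (k + 1))
  have H4 : (mseq (k + 2) : ℤ) = (Dseq (k + 1) : ℤ) * Dseq (k + 1) + Bseq (k + 2) := by
    exact_mod_cast congrArg (Nat.cast (R := ℤ)) (mseq_succ (k + 1))
  have H5 : (Dseq (k + 1) : ℤ) = (mseq k : ℤ) * mseq k := by
    exact_mod_cast congrArg (Nat.cast (R := ℤ)) (Dseq_succ k)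
  rw [H5] at H4
  rw [H3] at H1
  have hB2 : (Bseq (k + 2) : ℤ) = (mseq (k + 2) : ℤ) - (mseq k : ℤ) ^ 4 := by
    rw [H4]; ring
  have hB3 : (Bseq (k + 3) : ℤ) =
      (mseq (k + 2) : ℤ) * mseq (k + 2) - (Bseq (k + 2) : ℤ) * Bseq (k + 2) := by
    linarith [H2]
  rw [H1, hB3, hB2]
  ring
end

section
/- Let T be a perfect binary tree of height h > 0. Then the vertex cover number of T equals (2^(h+2) - (3 + (-1)^h))/6; equivalently, α(T) = (2^(h+1) - 2)/3 if h is even and α(T) = (2^(h+1) - 1)/3 if h is odd. -/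
variable {V : Type*}

def cnt (q n : ℕ) : ℕ :=
  ((Finset.Ico 1 (2 ^ n)).filter (fun k => Nat.log 2 k % 2 = q)).card

lemma cnt_succ (q n : ℕ) :
    cnt q (n + 1) = cnt q n + (if n % 2 = q then 2 ^ n else 0) := by
  unfold cnt
  have hsplit : Finset.Ico 1 (2 ^ (n+1)) =
      Finset.Ico 1 (2 ^ n) ∪ Finset.Ico (2 ^ n) (2 ^ (n+1)) := by
    rw [Finset.Ico_union_Ico_eq_Ico]
    · exact Nat.one_le_two_pow
    · exact Nat.pow_le_pow_right (by norm_num) (by omega)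
  have hdisj : Disjoint ((Finset.Ico 1 (2 ^ n)).filter (fun k => Nat.log 2 k % 2 = q))
      ((Finset.Ico (2 ^ n) (2 ^ (n+1))).filter (fun k => Nat.log 2 k % 2 = q)) :=
    Disjoint.mono (Finset.filter_subset _ _) (Finset.filter_subset _ _)
      (Finset.Ico_disjoint_Ico_consecutive 1 (2 ^ n) (2 ^ (n+1)))
  rw [hsplit, Finset.filter_union, Finset.card_union_of_disjoint hdisj]
  congr 1
  have hlog : ∀ k ∈ Finset.Ico (2 ^ n) (2 ^ (n+1)), Nat.log 2 k = n := by
    intro k hk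
    rw [Finset.mem_Ico] at hk
    exact Nat.log_eq_of_pow_le_of_lt_pow hk.1 hk.2
  by_cases hq : n % 2 = q
  · rw [if_pos hq, Finset.filter_true_of_mem (fun k hk => by rw [hlog k hk]; exact hq)]
    rw [Nat.card_Ico, pow_succ]; omega
  · rw [if_neg hq, Finset.filter_false_of_mem (fun k hk => by rw [hlog k hk]; exact hq),
      Finset.card_empty]

lemma cnt_formula (n : ℕ) :
    3 * cnt 0 n = 2 ^ (n + n % 2) - 1 ∧ 3 * cnt 1 n = 2 ^ (n + (n+1) % 2) - 2 := by
  induction n with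
  | zero => simp [cnt]
  | succ n ih =>
    obtain ⟨ih0, ih1⟩ := ih
    have h2 : (1:ℕ) ≤ 2 ^ n := Nat.one_le_two_pow
    rcases Nat.even_or_odd n with he | ho
    · have hn : n % 2 = 0 := Nat.even_iff.mp he
      have e1 : (n+1) % 2 = 1 := by omega
      have e2 : (n+1+1) % 2 = 0 := by omega
      rw [hn] at ih0; rw [e1] at ih1
      simp only [Nat.add_zero, pow_succ] at ih0 ih1
      constructor
      · rw [cnt_succ, if_pos hn, e1]
        simp only [Nat.mul_add, pow_succ]
        omega
      · rw [cnt_succ, if_neg (by omega), e2]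
        simp only [Nat.mul_add, Nat.mul_zero, Nat.add_zero, pow_succ]
        omega
    · have hn : n % 2 = 1 := Nat.odd_iff.mp ho
      have e1 : (n+1) % 2 = 0 := by omega
      have e2 : (n+1+1) % 2 = 1 := by omega
      rw [hn] at ih0; rw [e1] at ih1
      simp only [Nat.add_zero, pow_succ] at ih0 ih1
      constructor
      · rw [cnt_succ, if_neg (by omega), e1]
        simp only [Nat.mul_add, Nat.mul_zero, Nat.add_zero, pow_succ]
        omega
      · rw [cnt_succ, if_pos hn, e2]
        simp only [Nat.mul_add, pow_succ]
        omega

-- child depth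
lemma child_log {u v : ℕ} (hv : v = 2*u+1 ∨ v = 2*u+2) :
    Nat.log 2 (v+1) = Nat.log 2 (u+1) + 1 := by
  have h1 : 2 ^ Nat.log 2 (u+1) ≤ u+1 := Nat.pow_log_le_self 2 (by omega)
  have h2 : u+1 < 2 ^ (Nat.log 2 (u+1) + 1) := Nat.lt_pow_succ_log_self (by norm_num) _
  refine Nat.log_eq_of_pow_le_of_lt_pow ?_ ?_
  · rw [pow_succ]; omega
  · rw [pow_succ, pow_succ] at *; omega

lemma vcn_eq (h : ℕ) :
    (perfectBinaryTree h).vertexCoverNumber = cnt ((h+1) % 2) (h+1) := by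
  set p := (h+1) % 2 with hp
  set N := 2 ^ (h+1) - 1 with hN
  have hN2 : (2:ℕ) ≤ 2 ^ (h+1) := by
    calc (2:ℕ) = 2^1 := rfl
    _ ≤ 2^(h+1) := Nat.pow_le_pow_right (by norm_num) (by omega)
  set C : Finset (Fin N) := Finset.univ.filter (fun v => Nat.log 2 ((v:ℕ)+1) % 2 = p) with hC
  -- depth bound
  have hdepth : ∀ v : Fin N, Nat.log 2 ((v:ℕ)+1) ≤ h := by
    intro v
    have := v.2
    have : (v:ℕ) + 1 < 2^(h+1) := by omega
    have := Nat.log_lt_of_lt_pow (by omega : (v:ℕ)+1 ≠ 0) this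
    omega
  -- each member of C has a valid child
  have hchild : ∀ v : Fin N, v ∈ C → 2*(v:ℕ)+1 < N := by
    intro v hv
    rw [hC, Finset.mem_filter] at hv
    have hle := hdepth v
    have hne : Nat.log 2 ((v:ℕ)+1) ≠ h := by
      intro he; rw [he] at hv; omega
    have hlt : Nat.log 2 ((v:ℕ)+1) < h := lt_of_le_of_ne hle hne
    have : (v:ℕ)+1 < 2 ^ h := by
      calc (v:ℕ)+1 < 2 ^ (Nat.log 2 ((v:ℕ)+1) + 1) := Nat.lt_pow_succ_log_self (by norm_num) _
      _ ≤ 2 ^ h := Nat.pow_le_pow_right (by norm_num) (by omega)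
    have : 2*((v:ℕ)+1) < 2^(h+1) := by rw [pow_succ]; omega
    omega
  -- C is a vertex cover
  have hcover : (perfectBinaryTree h).IsVertexCover' C := by
    intro u v huv
    rw [perfectBinaryTree, SimpleGraph.fromRel_adj] at huv
    obtain ⟨hne, hrel | hrel⟩ := huv
    · have hd := child_log hrel
      simp only [hC, Finset.mem_filter, Finset.mem_univ, true_and]
      omega
    · have hd := child_log hrel
      simp only [hC, Finset.mem_filter, Finset.mem_univ, true_and]
      omega
  -- lower bound: any cover has at least C.card elements
  have hlb : ∀ D : Finset (Fin N), (perfectBinaryTree h).IsVertexCover' D → C.card ≤ D.card := by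
    intro D hD
    have hkey : ∀ (v : Fin N) (hv : v ∈ C), v ∉ D → (⟨2*(v:ℕ)+1, hchild v hv⟩ : Fin N) ∈ D := by
      intro v hv hvD
      have hadj : (perfectBinaryTree h).Adj v ⟨2*(v:ℕ)+1, hchild v hv⟩ := by
        rw [perfectBinaryTree, SimpleGraph.fromRel_adj]
        refine ⟨?_, Or.inl (Or.inl rfl)⟩
        intro he
        have : (v:ℕ) = 2*(v:ℕ)+1 := congrArg Fin.val he
        omega
      rcases hD hadj with h1 | h1
      · exact absurd h1 hvD
      · exact h1
    classical
    apply Finset.card_le_card_of_injOn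
      (fun v => if hv : v ∈ C then (if v ∈ D then v else ⟨2*(v:ℕ)+1, hchild v hv⟩) else v)
    · intro v hv
      simp only [dif_pos hv]
      by_cases hvD : v ∈ D
      · simpa [hvD] using hvD
      · have hmem : v ∈ C := hv
        simp only [hmem, dite_true, hvD, if_false]
        exact hkey v hv hvD
    · intro v hv w hw hf
      simp only [Finset.mem_coe] at hv hw
      simp only [dif_pos hv, dif_pos hw] at hf
      have hvp : Nat.log 2 ((v:ℕ)+1) % 2 = p := (Finset.mem_filter.mp hv).2
      have hwp : Nat.log 2 ((w:ℕ)+1) % 2 = p := (Finset.mem_filter.mp hw).2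
      by_cases hvD : v ∈ D <;> by_cases hwD : w ∈ D
      · simpa [hvD, hwD] using hf
      · rw [if_pos hvD, if_neg hwD] at hf
        exfalso
        have h1 : (v:ℕ) = 2*(w:ℕ)+1 := congrArg Fin.val hf
        have := child_log (Or.inl h1)
        omega
      · rw [if_neg hvD, if_pos hwD] at hf
        exfalso
        have h1 : (w:ℕ) = 2*(v:ℕ)+1 := congrArg Fin.val hf.symm
        have := child_log (Or.inl h1)
        omega
      · rw [if_neg hvD, if_neg hwD] at hf
        have : 2*(v:ℕ)+1 = 2*(w:ℕ)+1 := congrArg Fin.val hf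
        exact Fin.ext (by omega)
  -- vertexCoverNumber = C.card
  have hvcn : (perfectBinaryTree h).vertexCoverNumber = C.card := by
    apply le_antisymm
    · exact Nat.sInf_le ⟨C, hcover, rfl⟩
    · refine le_csInf ⟨C.card, ⟨C, hcover, rfl⟩⟩ ?_
      rintro k ⟨D, hD, rfl⟩
      exact hlb D hD
  rw [hvcn]
  -- C.card = cnt p (h+1)
  rw [cnt]
  refine Finset.card_bij (fun v _ => (v:ℕ)+1) ?_ ?_ ?_
  · intro v hv
    have hvN : (v:ℕ) < 2^(h+1)-1 := v.2
    refine Finset.mem_filter.mpr ⟨Finset.mem_Ico.mpr ⟨?_, ?_⟩, (Finset.mem_filter.mp hv).2⟩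
    · show 1 ≤ (v:ℕ)+1; omega
    · show (v:ℕ)+1 < 2^(h+1); omega
  · intro v _ w _ hvw
    have hvw' : (v:ℕ)+1 = (w:ℕ)+1 := hvw
    exact Fin.ext (by omega)
  · intro k hk
    rw [Finset.mem_filter, Finset.mem_Ico] at hk
    have hk1 : k - 1 < 2^(h+1) - 1 := by omega
    refine ⟨⟨k-1, hk1⟩, Finset.mem_filter.mpr ⟨Finset.mem_univ _, ?_⟩, by show k-1+1 = k; omega⟩
    show Nat.log 2 (k-1+1) % 2 = p
    rw [show k-1+1 = k by omega]
    exact hk.2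

/-- Vertex cover number of the perfect binary tree of height . -/
theorem vertexCoverNumber_perfectBinaryTree (h : ℕ) (hh : 0 < h) :
    6 * ((perfectBinaryTree h).vertexCoverNumber : ℤ) = 2 ^ (h + 2) - (3 + (-1) ^ h) ∧
    (Even h → 3 * ((perfectBinaryTree h).vertexCoverNumber : ℤ) = 2 ^ (h + 1) - 2) ∧
    (Odd h → 3 * ((perfectBinaryTree h).vertexCoverNumber : ℤ) = 2 ^ (h + 1) - 1) := by
  have hv := vcn_eq h
  have hf := cnt_formula (h + 1)
  have h2 : (2:ℕ) ≤ 2 ^ (h+1) := by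
    calc (2:ℕ) = 2 ^ 1 := rfl
    _ ≤ 2 ^ (h+1) := Nat.pow_le_pow_right (by norm_num) (by omega)
  rcases Nat.even_or_odd h with he | ho
  · have hm : h % 2 = 0 := Nat.even_iff.mp he
    have e1 : (h+1) % 2 = 1 := by omega
    have e2 : (h+1+1) % 2 = 0 := by omega
    rw [e1] at hv
    rw [e2] at hf
    have key : 3 * (perfectBinaryTree h).vertexCoverNumber = 2 ^ (h+1) - 2 := by
      rw [hv]; simpa using hf.2
    zify [h2] at key
    have hneg : ((-1:ℤ)) ^ h = 1 := he.neg_one_pow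
    refine ⟨?_, fun _ => key, fun hodd => absurd (Nat.odd_iff.mp hodd) (by omega)⟩
    rw [hneg]
    linear_combination 2 * key
  · have hm : h % 2 = 1 := Nat.odd_iff.mp ho
    have e1 : (h+1) % 2 = 0 := by omega
    rw [e1] at hv
    rw [e1] at hf
    have key : 3 * (perfectBinaryTree h).vertexCoverNumber = 2 ^ (h+1) - 1 := by
      rw [hv]; simpa using hf.1
    zify [show (1:ℕ) ≤ 2 ^ (h+1) by omega] at key
    have hneg : ((-1:ℤ)) ^ h = -1 := ho.neg_one_pow
    refine ⟨?_, fun heven => absurd (Nat.even_iff.mp heven) (by omega), fun _ => key⟩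
    rw [hneg]
    linear_combination 2 * key
end

section
/- Let T be a perfect binary tree of height h > 0. Then the matching number of T equals (2^(h+2) - (3 + (-1)^h))/6. -/
variable {V : Type*}

section Aux

open Finset

/-- log₂ of child index. -/
lemma log_child {u c : ℕ} (hc : c = 1 ∨ c = 2) :
    Nat.log 2 (2 * u + c + 1) = Nat.log 2 (u + 1) + 1 := by
  have h1 : 2 ^ Nat.log 2 (u + 1) ≤ u + 1 := Nat.pow_log_le_self 2 (by omega)
  have h2 : u + 1 < 2 ^ (Nat.log 2 (u + 1) + 1) := Nat.lt_pow_succ_log_self (by omega) _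
  apply Nat.log_eq_of_pow_le_of_lt_pow
  · rw [pow_succ]; omega
  · rw [pow_succ, pow_succ]; omega

/-- Counting step: number of `v < 2^(m+1) - 1` with `log₂(v+1) % 2 = p`. -/
lemma count_step (m p : ℕ) :
    ((Finset.range (2 ^ (m + 1) - 1)).filter (fun v => Nat.log 2 (v + 1) % 2 = p)).card
      = ((Finset.range (2 ^ m - 1)).filter (fun v => Nat.log 2 (v + 1) % 2 = p)).card
        + (if m % 2 = p then 2 ^ m else 0) := by
  have hm : 1 ≤ 2 ^ m := Nat.one_le_two_pow
  have hm2 : 2 ^ (m + 1) = 2 * 2 ^ m := by ring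
  have hsplit : Finset.range (2 ^ (m + 1) - 1)
      = Finset.range (2 ^ m - 1) ∪ Finset.Ico (2 ^ m - 1) (2 ^ (m + 1) - 1) := by
    rw [Finset.range_eq_Ico, Finset.range_eq_Ico]
    exact (Finset.Ico_union_Ico_eq_Ico (a := 0) (b := 2 ^ m - 1) (c := 2 ^ (m + 1) - 1) (by omega) (by omega)).symm
  have hdisj : Disjoint (Finset.range (2 ^ m - 1)) (Finset.Ico (2 ^ m - 1) (2 ^ (m + 1) - 1)) := by
    simp [Finset.disjoint_left, Finset.mem_Ico]
    omega
  rw [hsplit, Finset.filter_union, Finset.card_union_of_disjoint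
    (Finset.disjoint_filter_filter hdisj)]
  congr 1
  have hlog : ∀ v ∈ Finset.Ico (2 ^ m - 1) (2 ^ (m + 1) - 1), Nat.log 2 (v + 1) = m := by
    intro v hv
    rw [Finset.mem_Ico] at hv
    exact Nat.log_eq_of_pow_le_of_lt_pow (by omega) (by omega)
  by_cases hp : m % 2 = p
  · rw [if_pos hp, Finset.filter_true_of_mem (fun v hv => by rw [hlog v hv, hp]),
      Nat.card_Ico]
    omega
  · rw [if_neg hp, Finset.filter_false_of_mem (fun v hv => by rw [hlog v hv]; exact hp)]
    simp

/-- Closed form for the counts. -/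
lemma count_val (m : ℕ) :
    3 * ((Finset.range (2 ^ m - 1)).filter (fun v => Nat.log 2 (v + 1) % 2 = 0)).card + 1
        = 2 ^ (m + m % 2)
    ∧ 3 * ((Finset.range (2 ^ m - 1)).filter (fun v => Nat.log 2 (v + 1) % 2 = 1)).card + 2
        = 2 ^ (m + 1 - m % 2) := by
  induction m with
  | zero => simp
  | succ m ih =>
    obtain ⟨ih0, ih1⟩ := ih
    rcases Nat.mod_two_eq_zero_or_one m with hm | hm
    · have e0 : m + m % 2 = m := by omega
      have e1 : m + 1 - m % 2 = m + 1 := by omega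
      have e2 : m + 1 + (m + 1) % 2 = m + 2 := by omega
      have e3 : m + 1 + 1 - (m + 1) % 2 = m + 1 := by omega
      rw [e0] at ih0; rw [e1] at ih1
      rw [count_step, count_step, e2, e3, if_pos hm, if_neg (by omega)]
      have : 2 ^ (m + 2) = 4 * 2 ^ m := by ring
      omega
    · have e0 : m + m % 2 = m + 1 := by omega
      have e1 : m + 1 - m % 2 = m := by omega
      have e2 : m + 1 + (m + 1) % 2 = m + 1 := by omega
      have e3 : m + 1 + 1 - (m + 1) % 2 = m + 2 := by omega
      rw [e0] at ih0; rw [e1] at ih1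
      rw [count_step, count_step, e2, e3, if_neg (by omega), if_pos hm]
      have h4 : 2 ^ (m + 2) = 4 * 2 ^ m := by ring
      have h5 : 2 ^ (m + 1) = 2 * 2 ^ m := by ring
      omega

end Aux

section Tree

open Finset SimpleGraph

variable (h : ℕ)

/-- The cover/matching base set: vertices whose height has parity `(h+1) % 2`. -/
noncomputable def coverSet : Finset (Fin (2 ^ (h + 1) - 1)) :=
  Finset.univ.filter (fun v => Nat.log 2 ((v : ℕ) + 1) % 2 = (h + 1) % 2)

lemma val_lt (v : Fin (2 ^ (h + 1) - 1)) : (v : ℕ) + 1 < 2 ^ (h + 1) := by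
  have := v.2; omega

lemma height_le (v : Fin (2 ^ (h + 1) - 1)) : Nat.log 2 ((v : ℕ) + 1) ≤ h := by
  have := Nat.log_lt_of_lt_pow (x := h + 1) (y := (v : ℕ) + 1) (by omega) (val_lt h v)
  omega

lemma coverSet_child_lt {v : Fin (2 ^ (h + 1) - 1)} (hv : v ∈ coverSet h) :
    2 * (v : ℕ) + 1 < 2 ^ (h + 1) - 1 := by
  rw [coverSet, Finset.mem_filter] at hv
  have h1 : Nat.log 2 ((v : ℕ) + 1) ≤ h := height_le h v
  have h2 : Nat.log 2 ((v : ℕ) + 1) ≠ h := by omega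
  have h3 : (v : ℕ) + 1 < 2 ^ (Nat.log 2 ((v : ℕ) + 1) + 1) :=
    Nat.lt_pow_succ_log_self (by omega) _
  have h4 : 2 ^ (Nat.log 2 ((v : ℕ) + 1) + 1) ≤ 2 ^ h :=
    Nat.pow_le_pow_right (by omega) (by omega)
  have h5 : 2 ^ (h + 1) = 2 * 2 ^ h := by ring
  omega

/-- The left child map (total, junk value outside domain). -/
def ch (v : Fin (2 ^ (h + 1) - 1)) : Fin (2 ^ (h + 1) - 1) :=
  if hv : 2 * (v : ℕ) + 1 < 2 ^ (h + 1) - 1 then ⟨2 * (v : ℕ) + 1, hv⟩ else v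

lemma ch_val {v : Fin (2 ^ (h + 1) - 1)} (hv : v ∈ coverSet h) :
    ((ch h v : Fin (2 ^ (h + 1) - 1)) : ℕ) = 2 * (v : ℕ) + 1 := by
  rw [ch, dif_pos (coverSet_child_lt h hv)]

lemma coverSet_isCover : (perfectBinaryTree h).IsVertexCover' (coverSet h) := by
  intro u v huv
  rw [perfectBinaryTree, SimpleGraph.fromRel_adj] at huv
  obtain ⟨-, hr⟩ := huv
  have key : Nat.log 2 ((v : ℕ) + 1) = Nat.log 2 ((u : ℕ) + 1) + 1
      ∨ Nat.log 2 ((u : ℕ) + 1) = Nat.log 2 ((v : ℕ) + 1) + 1 := by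
    rcases hr with (hc | hc) | (hc | hc)
    · left; rw [hc]; exact log_child (Or.inl rfl)
    · left; rw [hc, show 2 * (u:ℕ) + 2 = 2 * (u:ℕ) + 2 from rfl]
      exact log_child (Or.inr rfl)
    · right; rw [hc]; exact log_child (Or.inl rfl)
    · right; rw [hc]; exact log_child (Or.inr rfl)
  rw [coverSet]
  simp only [Finset.mem_filter, Finset.mem_univ, true_and]
  omega

end Tree

section Tree2

open Finset SimpleGraph

variable (h : ℕ)

lemma coverSet_ne_child {a b : Fin (2 ^ (h + 1) - 1)} (ha : a ∈ coverSet h)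
    (hb : b ∈ coverSet h) : (a : ℕ) ≠ 2 * (b : ℕ) + 1 := by
  intro hab
  have hl : Nat.log 2 ((a : ℕ) + 1) = Nat.log 2 ((b : ℕ) + 1) + 1 := by
    rw [hab]; exact log_child (Or.inl rfl)
  rw [coverSet, Finset.mem_filter] at ha hb
  omega

/-- The matching: each cover vertex matched to its left child. -/
noncomputable def matchSet : Finset (Sym2 (Fin (2 ^ (h + 1) - 1))) :=
  (coverSet h).image (fun v => s(v, ch h v))

lemma matchSet_subset : ↑(matchSet h) ⊆ (perfectBinaryTree h).edgeSet := by
  intro e he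
  simp only [matchSet, Finset.coe_image, Set.mem_image, Finset.mem_coe] at he
  obtain ⟨v, hv, rfl⟩ := he
  rw [SimpleGraph.mem_edgeSet, perfectBinaryTree, SimpleGraph.fromRel_adj]
  have hc := ch_val h hv
  constructor
  · intro hvc
    rw [← hvc] at hc
    omega
  · exact Or.inl (Or.inl hc)

lemma matchSet_pairwise :
    (↑(matchSet h) : Set (Sym2 (Fin (2 ^ (h + 1) - 1)))).Pairwise
      fun e f => ∀ x, x ∈ e → x ∉ f := by
  intro e he f hf hef x hx hxf
  simp only [matchSet, Finset.coe_image, Set.mem_image, Finset.mem_coe] at he hf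
  obtain ⟨v, hv, rfl⟩ := he
  obtain ⟨w, hw, rfl⟩ := hf
  have hcv := ch_val h hv
  have hcw := ch_val h hw
  have hvw : (v : ℕ) ≠ (w : ℕ) := by
    intro hvaleq
    exact hef (by rw [Fin.ext hvaleq])
  rcases Sym2.mem_iff.mp hx with rfl | rfl <;> rcases Sym2.mem_iff.mp hxf with heq | heq
  · exact hvw (by rw [heq])
  · exact coverSet_ne_child h hv hw (by rw [heq, hcw])
  · exact coverSet_ne_child h hw hv (by rw [← heq, hcv])
  · apply hvw
    have : ((ch h v : Fin (2 ^ (h + 1) - 1)) : ℕ) = ((ch h w : Fin (2 ^ (h + 1) - 1)) : ℕ) := by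
      rw [heq]
    omega

lemma matchSet_card : (matchSet h).card = (coverSet h).card := by
  rw [matchSet]
  apply Finset.card_image_of_injOn
  intro v hv w hw heq
  rw [Finset.mem_coe] at hv hw
  have hcv := ch_val h hv
  have hcw := ch_val h hw
  rcases Sym2.eq_iff.mp heq with ⟨h1, -⟩ | ⟨h1, h2⟩
  · exact h1
  · exact absurd (by rw [h1, hcw]) (coverSet_ne_child h hv hw)

lemma matching_le (M : Finset (Sym2 (Fin (2 ^ (h + 1) - 1))))
    (hsub : ↑M ⊆ (perfectBinaryTree h).edgeSet)
    (hp : (↑M : Set (Sym2 (Fin (2 ^ (h + 1) - 1)))).Pairwise fun e f => ∀ x, x ∈ e → x ∉ f) :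
    M.card ≤ (coverSet h).card := by
  classical
  set pick : Sym2 (Fin (2 ^ (h + 1) - 1)) → Fin (2 ^ (h + 1) - 1) :=
    fun e => if e.inf ∈ coverSet h then e.inf else e.sup with hpick
  have hmem : ∀ e : Sym2 (Fin (2 ^ (h + 1) - 1)), pick e ∈ e := by
    intro e
    induction e using Sym2.ind with
    | _ a b =>
      simp only [hpick, Sym2.inf_mk, Sym2.sup_mk]
      rcases le_total a b with hab | hab
      · simp only [min_eq_left hab, max_eq_right hab]; split <;> simp
      · simp only [min_eq_right hab, max_eq_left hab]; split <;> simp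
  have hC : ∀ e ∈ M, pick e ∈ coverSet h := by
    intro e he
    have hadj : e ∈ (perfectBinaryTree h).edgeSet := hsub he
    induction e using Sym2.ind with
    | _ a b =>
      rw [SimpleGraph.mem_edgeSet] at hadj
      have hcov := coverSet_isCover h hadj
      simp only [hpick, Sym2.inf_mk, Sym2.sup_mk]
      by_cases hif : a ⊓ b ∈ coverSet h
      · simp only [hif, if_true]
      · simp only [hif, if_false]
        rcases le_total a b with hab | hab
        · rw [inf_eq_left.2 hab] at hif; rw [sup_eq_right.2 hab]; tauto
        · rw [inf_eq_right.2 hab] at hif; rw [sup_eq_left.2 hab]; tauto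
  apply Finset.card_le_card_of_injOn pick hC
  intro e1 he1 e2 he2 heq
  by_contra hne
  rw [Finset.mem_coe] at he1 he2
  exact hp (Finset.mem_coe.mpr he1) (Finset.mem_coe.mpr he2) hne (pick e1) (hmem e1)
    (heq ▸ hmem e2)

lemma coverSet_card :
    (coverSet h).card = ((Finset.range (2 ^ (h + 1) - 1)).filter
      (fun v => Nat.log 2 (v + 1) % 2 = (h + 1) % 2)).card := by
  rw [coverSet, Finset.card_filter, Finset.card_filter]
  exact Fin.sum_univ_eq_sum_range
    (fun v => if Nat.log 2 (v + 1) % 2 = (h + 1) % 2 then 1 else 0) _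

end Tree2

/-- Matching number of the perfect binary tree of height . -/
theorem matchingNumber_perfectBinaryTree (h : ℕ) (hh : 0 < h) :
    6 * ((perfectBinaryTree h).matchingNumber : ℤ) = 2 ^ (h + 2) - (3 + (-1) ^ h) := by

  classical
  have hub : ∀ k ∈ {k | ∃ M : Finset (Sym2 (Fin (2 ^ (h + 1) - 1))),
      (↑M : Set (Sym2 (Fin (2 ^ (h + 1) - 1)))) ⊆ (perfectBinaryTree h).edgeSet ∧
      ((↑M : Set (Sym2 (Fin (2 ^ (h + 1) - 1)))).Pairwise fun e f => ∀ v, v ∈ e → v ∉ f) ∧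
      M.card = k}, k ≤ (coverSet h).card := by
    rintro k ⟨M, hsub, hp, rfl⟩
    exact matching_le h M hsub hp
  have hmem : (coverSet h).card ∈ {k | ∃ M : Finset (Sym2 (Fin (2 ^ (h + 1) - 1))),
      (↑M : Set (Sym2 (Fin (2 ^ (h + 1) - 1)))) ⊆ (perfectBinaryTree h).edgeSet ∧
      ((↑M : Set (Sym2 (Fin (2 ^ (h + 1) - 1)))).Pairwise fun e f => ∀ v, v ∈ e → v ∉ f) ∧
      M.card = (coverSet h).card} :=
    ⟨matchSet h, matchSet_subset h, matchSet_pairwise h, matchSet_card h⟩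
  have key : (perfectBinaryTree h).matchingNumber = (coverSet h).card := by
    rw [SimpleGraph.matchingNumber]
    exact le_antisymm (csSup_le ⟨_, hmem⟩ hub) (le_csSup ⟨_, hub⟩ hmem)
  obtain ⟨c0, c1⟩ := count_val (h + 1)
  rw [key, coverSet_card]
  rcases Nat.mod_two_eq_zero_or_one h with hp | hp
  · have h1 : (h + 1) % 2 = 1 := by omega
    rw [h1]
    have e : h + 1 + 1 - (h + 1) % 2 = h + 1 := by omega
    rw [e] at c1
    have hneg : (-1 : ℤ) ^ h = 1 := Even.neg_one_pow (Nat.even_iff.2 hp)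
    rw [hneg]
    have hc := congrArg (Nat.cast : ℕ → ℤ) c1
    push_cast at hc
    have h2 : (2 : ℤ) ^ (h + 2) = 2 * 2 ^ (h + 1) := by ring
    linarith
  · have h1 : (h + 1) % 2 = 0 := by omega
    rw [h1]
    have e : h + 1 + (h + 1) % 2 = h + 1 := by omega
    rw [e] at c0
    have hneg : (-1 : ℤ) ^ h = -1 := Odd.neg_one_pow (Nat.odd_iff.2 hp)
    rw [hneg]
    have hc := congrArg (Nat.cast : ℕ → ℤ) c0
    push_cast at hc
    have h2 : (2 : ℤ) ^ (h + 2) = 2 * 2 ^ (h + 1) := by ring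
    linarith
end

section
/- Let T be a perfect binary tree of height h > 0 with n = 2^(h+1) - 1 vertices. Then the independence number of T equals (2^(h+3) - 3 + (-1)^h)/6. -/
variable {V : Type*}

section Aux


/-- Count of vertices on levels with parity of `h`. -/
def levelCount (h : ℕ) : ℕ :=
  ((Finset.range (2 ^ (h + 1) - 1)).filter (fun m => Nat.log 2 (m + 1) % 2 = h % 2)).card

lemma log_left (u : ℕ) : Nat.log 2 (2 * u + 2) = Nat.log 2 (u + 1) + 1 := by
  have e : 2 * u + 2 = (u + 1) * 2 := by ring
  rw [e, Nat.log_mul_base (by norm_num) (Nat.succ_ne_zero u)]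

lemma log_right (u : ℕ) : Nat.log 2 (2 * u + 3) = Nat.log 2 (u + 1) + 1 := by
  have h1 : 2 ^ Nat.log 2 (u + 1) ≤ u + 1 := Nat.pow_log_le_self 2 (Nat.succ_ne_zero u)
  have h2 : u + 1 < 2 ^ (Nat.log 2 (u + 1) + 1) := Nat.lt_pow_succ_log_self (by norm_num) _
  have e1 : 2 ^ (Nat.log 2 (u + 1) + 1) = 2 * 2 ^ Nat.log 2 (u + 1) := by ring
  have e2 : 2 ^ (Nat.log 2 (u + 1) + 1 + 1) = 4 * 2 ^ Nat.log 2 (u + 1) := by ring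
  apply Nat.log_eq_of_pow_le_of_lt_pow <;> omega

lemma levelCount_rec (h : ℕ) : levelCount (h + 1) + levelCount h + 1 = 2 ^ (h + 2) := by
  have h1 : (1:ℕ) ≤ 2 ^ (h + 1) := Nat.one_le_two_pow
  have h2 : (2:ℕ) ^ (h + 2) = 2 * 2 ^ (h + 1) := by ring
  have hle : 2 ^ (h + 1) - 1 ≤ 2 ^ (h + 2) - 1 := by omega
  have hsplit : Finset.range (2 ^ (h + 2) - 1) =
      Finset.range (2 ^ (h + 1) - 1) ∪ Finset.Ico (2 ^ (h + 1) - 1) (2 ^ (h + 2) - 1) := by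
    rw [Finset.range_eq_Ico, Finset.range_eq_Ico, Finset.Ico_union_Ico_eq_Ico (Nat.zero_le _) hle]
  have hdisj : Disjoint (Finset.range (2 ^ (h + 1) - 1))
      (Finset.Ico (2 ^ (h + 1) - 1) (2 ^ (h + 2) - 1)) := by
    rw [Finset.range_eq_Ico]
    exact Finset.Ico_disjoint_Ico_consecutive 0 _ _
  have hIco : (Finset.Ico (2 ^ (h + 1) - 1) (2 ^ (h + 2) - 1)).filter
      (fun m => Nat.log 2 (m + 1) % 2 = (h + 1) % 2) =
      Finset.Ico (2 ^ (h + 1) - 1) (2 ^ (h + 2) - 1) := by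
    apply Finset.filter_true_of_mem
    intro m hm
    rw [Finset.mem_Ico] at hm
    have hlog : Nat.log 2 (m + 1) = h + 1 := by
      have e : (2:ℕ) ^ (h + 1 + 1) = 2 ^ (h + 2) := by ring
      apply Nat.log_eq_of_pow_le_of_lt_pow <;> omega
    rw [hlog]
  have hcomp : ((Finset.range (2 ^ (h + 1) - 1)).filter
        (fun m => Nat.log 2 (m + 1) % 2 = (h + 1) % 2)).card
      + levelCount h = 2 ^ (h + 1) - 1 := by
    unfold levelCount
    have he : (Finset.range (2 ^ (h + 1) - 1)).filter
        (fun m => Nat.log 2 (m + 1) % 2 = (h + 1) % 2) =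
        (Finset.range (2 ^ (h + 1) - 1)).filter
        (fun m => ¬ (Nat.log 2 (m + 1) % 2 = h % 2)) := by
      apply Finset.filter_congr
      intro m _
      omega
    rw [he, add_comm, Finset.card_filter_add_card_filter_not, Finset.card_range]
  have hmain : levelCount (h + 1) = ((Finset.range (2 ^ (h + 1) - 1)).filter
        (fun m => Nat.log 2 (m + 1) % 2 = (h + 1) % 2)).card
      + (2 ^ (h + 2) - 1 - (2 ^ (h + 1) - 1)) := by
    unfold levelCount
    rw [hsplit, Finset.filter_union, Finset.card_union_of_disjoint
      (Finset.disjoint_filter_filter hdisj), hIco, Nat.card_Ico]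
  omega

lemma levelCount_zero : levelCount 0 = 1 := by
  have e : (2:ℕ) ^ (0 + 1) - 1 = 1 := rfl
  have hl : Nat.log 2 (0 + 1) = 0 := Nat.log_one_right 2
  unfold levelCount
  rw [e, Finset.range_one]
  rw [Finset.filter_singleton]
  simp [hl]

lemma levelCount_formula (h : ℕ) :
    6 * (levelCount h : ℤ) = 2 ^ (h + 3) - 3 + (-1) ^ h := by
  induction h with
  | zero =>
    rw [levelCount_zero]; norm_num
  | succ n ih =>
    have hr := levelCount_rec n
    have hc : (levelCount (n + 1) : ℤ) + levelCount n + 1 = 2 ^ (n + 2) := by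
      exact_mod_cast congrArg (Nat.cast : ℕ → ℤ) hr
    have hpow : (2:ℤ) ^ (n + 1 + 3) = 4 * 2 ^ (n + 2) := by ring
    have hneg : (-1:ℤ) ^ (n + 1) = -(-1) ^ n := by ring
    have hpow2 : (2:ℤ) ^ (n + 3) = 2 * 2 ^ (n + 2) := by ring
    rw [hpow, hneg]
    rw [hpow2] at ih
    linarith




lemma heapHeight_le {h : ℕ} (v : Fin (2 ^ (h + 1) - 1)) : heapHeight v ≤ h := by
  have h1 : (1:ℕ) ≤ 2 ^ (h + 1) := Nat.one_le_two_pow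
  have hv : (v : ℕ) + 1 < 2 ^ (h + 1) := by have := v.isLt; omega
  have := Nat.log_lt_of_lt_pow (y := (v : ℕ) + 1) (by omega) hv
  unfold heapHeight
  omega

lemma adj_heapHeight {h : ℕ} {u v : Fin (2 ^ (h + 1) - 1)}
    (hadj : (perfectBinaryTree h).Adj u v) :
    heapHeight u + 1 = heapHeight v ∨ heapHeight v + 1 = heapHeight u := by
  rw [perfectBinaryTree, SimpleGraph.fromRel_adj] at hadj
  unfold heapHeight
  rcases hadj.2 with (hc | hc) | (hc | hc)
  · left; rw [show (v : ℕ) + 1 = 2 * (u : ℕ) + 2 by omega, log_left]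
  · left; rw [show (v : ℕ) + 1 = 2 * (u : ℕ) + 3 by omega, log_right]
  · right; rw [show (u : ℕ) + 1 = 2 * (v : ℕ) + 2 by omega, log_left]
  · right; rw [show (u : ℕ) + 1 = 2 * (v : ℕ) + 3 by omega, log_right]

/-- The set of vertices on levels with parity of `h`. -/
def levelSet (h : ℕ) : Finset (Fin (2 ^ (h + 1) - 1)) :=
  Finset.univ.filter (fun v => heapHeight v % 2 = h % 2)

lemma levelSet_card (h : ℕ) : (levelSet h).card = levelCount h := by
  unfold levelCount
  refine Finset.card_bij (fun v _ => (v : ℕ)) ?_ ?_ ?_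
  · intro v hv
    rw [levelSet, Finset.mem_filter] at hv
    rw [Finset.mem_filter, Finset.mem_range]
    exact ⟨v.isLt, hv.2⟩
  · intro a _ b _ hab
    exact Fin.val_injective hab
  · intro m hm
    rw [Finset.mem_filter, Finset.mem_range] at hm
    exact ⟨⟨m, hm.1⟩, by rw [levelSet, Finset.mem_filter]; exact ⟨Finset.mem_univ _, hm.2⟩, rfl⟩

lemma levelSet_indep (h : ℕ) : (perfectBinaryTree h).IsIndepSet' (levelSet h) := by
  intro u hu v hv hadj
  rw [levelSet, Finset.mem_filter] at hu hv
  have := adj_heapHeight hadj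
  omega

lemma child_lt {h : ℕ} (v : Fin (2 ^ (h + 1) - 1))
    (hp : ¬ heapHeight v % 2 = h % 2) : 2 * (v : ℕ) + 1 < 2 ^ (h + 1) - 1 := by
  have h1 := heapHeight_le v
  have h3 : heapHeight v < h := by omega
  have h4 : (v : ℕ) + 1 < 2 ^ h := Nat.lt_pow_of_log_lt one_lt_two h3
  have h5 : (2:ℕ) ^ (h + 1) = 2 * 2 ^ h := by ring
  omega

def pushMap (h : ℕ) (v : Fin (2 ^ (h + 1) - 1)) : Fin (2 ^ (h + 1) - 1) :=
  if hp : heapHeight v % 2 = h % 2 then v else ⟨2 * (v : ℕ) + 1, child_lt v hp⟩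

lemma pushMap_mem (h : ℕ) (v : Fin (2 ^ (h + 1) - 1)) : pushMap h v ∈ levelSet h := by
  rw [levelSet, Finset.mem_filter]
  refine ⟨Finset.mem_univ _, ?_⟩
  unfold pushMap
  split_ifs with hp
  · exact hp
  · show Nat.log 2 (2 * (v : ℕ) + 1 + 1) % 2 = h % 2
    rw [show 2 * (v : ℕ) + 1 + 1 = 2 * (v : ℕ) + 2 by omega, log_left]
    unfold heapHeight at hp
    omega

lemma card_le_levelSet {h : ℕ} (W : Finset (Fin (2 ^ (h + 1) - 1)))
    (hW : (perfectBinaryTree h).IsIndepSet' W) : W.card ≤ (levelSet h).card := by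
  apply Finset.card_le_card_of_injOn (pushMap h) (fun v _ => pushMap_mem h v)
  intro u hu v hv he
  have hadj : ∀ a b : Fin (2 ^ (h + 1) - 1), a ∈ W → b ∈ W →
      (b : ℕ) = 2 * (a : ℕ) + 1 → False := by
    intro a b ha hb hab
    apply hW a ha b hb
    rw [perfectBinaryTree, SimpleGraph.fromRel_adj]
    constructor
    · intro hcon; rw [hcon] at hab; omega
    · left; left; exact hab
  unfold pushMap at he
  split_ifs at he with h1 h2 h2
  · exact he
  · have hc : (u : ℕ) = 2 * (v : ℕ) + 1 := congrArg Fin.val he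
    exact (hadj v u hv hu hc).elim
  · have hc : 2 * (u : ℕ) + 1 = (v : ℕ) := congrArg Fin.val he
    exact (hadj u v hu hv hc.symm).elim
  · have := congrArg Fin.val he
    simp only at this
    exact Fin.val_injective (by omega)


/-- Independence number of the perfect binary tree of height . -/
theorem indepNumber_perfectBinaryTree (h : ℕ) (hh : 0 < h) :
    6 * ((perfectBinaryTree h).indepNumber : ℤ) = 2 ^ (h + 3) - 3 + (-1) ^ h := by
  have key : (perfectBinaryTree h).indepNumber = (levelSet h).card := by
    unfold SimpleGraph.indepNumber
    apply le_antisymm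
    · apply csSup_le
      · exact ⟨0, ∅, fun u hu => absurd hu (Finset.notMem_empty u), Finset.card_empty⟩
      · rintro k ⟨W, hW, rfl⟩
        exact card_le_levelSet W hW
    · apply le_csSup
      · exact ⟨(levelSet h).card, by rintro k ⟨W, hW, rfl⟩; exact card_le_levelSet W hW⟩
      · exact ⟨levelSet h, levelSet_indep h, rfl⟩
  rw [key, levelSet_card]
  exact levelCount_formula h


end Aux
end

section
/- Let T be a perfect binary tree of height h = 3m with m ≥ 1. Then the minimum size of a maximal independent set of T equals (4·8^m + 3)/7; such a minimum-size maximal independent set consists of the root together with all vertices at heights h-1, h-4, h-7, ..., 2. -/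
variable {V : Type*}

namespace PBT

open Finset SimpleGraph

variable {h : ℕ}

abbrev N (h : ℕ) : ℕ := 2 ^ (h + 1) - 1

lemma pow_pos' (k : ℕ) : 1 ≤ 2 ^ k := Nat.one_le_two_pow

lemma val_lt (v : Fin (N h)) : (v : ℕ) + 1 < 2 ^ (h + 1) := by
  have hv : (v : ℕ) < 2 ^ (h + 1) - 1 := v.2
  have := pow_pos' (h+1)
  omega

lemma hh_spec (v : Fin (N h)) :
    2 ^ heapHeight v ≤ (v : ℕ) + 1 ∧ (v : ℕ) + 1 < 2 ^ (heapHeight v + 1) :=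
  ⟨Nat.pow_log_le_self 2 (by omega), Nat.lt_pow_succ_log_self (by norm_num) _⟩

lemma hh_le (v : Fin (N h)) : heapHeight v ≤ h := by
  have h1 := val_lt v
  have := (Nat.log_lt_iff_lt_pow (b := 2) (by norm_num) (x := h+1) (y := (v:ℕ)+1) (by omega)).2 h1
  exact Nat.lt_succ_iff.mp this

lemma hh_eq_of (v : Fin (N h)) {t : ℕ} (h1 : 2 ^ t ≤ (v:ℕ)+1) (h2 : (v:ℕ)+1 < 2^(t+1)) :
    heapHeight v = t := Nat.log_eq_of_pow_le_of_lt_pow h1 h2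

lemma hh_child {x y : Fin (N h)} (hy : (y:ℕ) = 2*(x:ℕ)+1 ∨ (y:ℕ) = 2*(x:ℕ)+2) :
    heapHeight y = heapHeight x + 1 := by
  obtain ⟨h1, h2⟩ := hh_spec x
  apply hh_eq_of
  · have : 2 ^ (heapHeight x + 1) = 2 * 2 ^ heapHeight x := by ring
    omega
  · have : 2 ^ (heapHeight x + 1 + 1) = 2 * 2 ^ (heapHeight x + 1) := by ring
    omega

lemma child_lt (v : Fin (N h)) (hv : heapHeight v < h) : 2*(v:ℕ)+2 < N h := by
  obtain ⟨h1, h2⟩ := hh_spec v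
  have hle : heapHeight v + 1 ≤ h := hv
  have : (2:ℕ) ^ (heapHeight v + 1) ≤ 2 ^ h := Nat.pow_le_pow_right (by norm_num) hle
  have h3 : (2:ℕ)^(h+1) = 2 * 2^h := by ring
  simp only [N]; omega

lemma adj_iff {u v : Fin (N h)} : (perfectBinaryTree h).Adj u v ↔
    ((v:ℕ) = 2*(u:ℕ)+1 ∨ (v:ℕ) = 2*(u:ℕ)+2 ∨ (u:ℕ) = 2*(v:ℕ)+1 ∨ (u:ℕ) = 2*(v:ℕ)+2) := by
  rw [perfectBinaryTree, SimpleGraph.fromRel_adj]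
  constructor
  · rintro ⟨_, hr⟩; tauto
  · intro hr
    refine ⟨?_, by tauto⟩
    intro he; rw [Fin.ext_iff] at he; omega


def sub (v : Fin (N h)) : Finset (Fin (N h)) :=
  Finset.univ.filter fun u => ((u:ℕ)+1) / 2^(heapHeight u - heapHeight v) = (v:ℕ)+1

lemma mem_sub {v u : Fin (N h)} :
    u ∈ sub v ↔ ((u:ℕ)+1) / 2^(heapHeight u - heapHeight v) = (v:ℕ)+1 := by
  simp [sub]

lemma mem_sub_self (v : Fin (N h)) : v ∈ sub v := by
  simp [mem_sub]

lemma eq_of_mem_sub_of_hh_le {v u : Fin (N h)} (hu : u ∈ sub v)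
    (hle : heapHeight u ≤ heapHeight v) : u = v := by
  rw [mem_sub] at hu
  rw [Nat.sub_eq_zero_of_le hle] at hu
  simp at hu
  exact Fin.ext (by omega)

lemma hh_lt_of_mem_sub {v u : Fin (N h)} (hu : u ∈ sub v) (hne : u ≠ v) :
    heapHeight v < heapHeight u := by
  by_contra hc
  exact hne (eq_of_mem_sub_of_hh_le hu (by omega))

lemma mem_sub_of_child {u z : Fin (N h)} (hz : (z:ℕ) = 2*(u:ℕ)+1 ∨ (z:ℕ) = 2*(u:ℕ)+2) :
    z ∈ sub u := by
  rw [mem_sub, hh_child hz]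
  simp only [Nat.add_sub_cancel_left, pow_one]
  omega

lemma sub_trans {v w u : Fin (N h)} (h1 : u ∈ sub w) (h2 : w ∈ sub v) : u ∈ sub v := by
  by_cases hne : u = w
  · subst hne; exact h2
  by_cases hne2 : w = v
  · subst hne2; exact h1
  have l1 := hh_lt_of_mem_sub h1 hne
  have l2 := hh_lt_of_mem_sub h2 hne2
  rw [mem_sub] at h1 h2 ⊢
  have heq : heapHeight u - heapHeight v
      = (heapHeight u - heapHeight w) + (heapHeight w - heapHeight v) := by omega
  rw [heq, pow_add, ← Nat.div_div_eq_div_mul, h1, h2]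

lemma sub_leaf {v : Fin (N h)} (hv : heapHeight v = h) : sub v = {v} := by
  ext u
  simp only [Finset.mem_singleton]
  constructor
  · intro hu
    exact eq_of_mem_sub_of_hh_le hu (by rw [hv]; exact hh_le u)
  · rintro rfl; exact mem_sub_self u

lemma sub_root (v : Fin (N h)) (hv : (v:ℕ) = 0) : sub v = Finset.univ := by
  ext u
  simp only [Finset.mem_univ, iff_true, mem_sub, hv]
  have hh0 : heapHeight v = 0 := by
    apply hh_eq_of <;> simp [hv]
  rw [hh0, Nat.sub_zero]
  obtain ⟨h1, h2⟩ := hh_spec u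
  have h3 : (2:ℕ)^(heapHeight u + 1) = 2 * 2^(heapHeight u) := by ring
  exact Nat.div_eq_of_lt_le (by omega) (by omega)

lemma sub_decomp (v l r : Fin (N h)) (hv : heapHeight v < h)
    (hl : (l:ℕ) = 2*(v:ℕ)+1) (hr : (r:ℕ) = 2*(v:ℕ)+2) :
    sub v = insert v (sub l ∪ sub r) ∧ v ∉ sub l ∪ sub r ∧ Disjoint (sub l) (sub r) := by
  have hhl : heapHeight l = heapHeight v + 1 := hh_child (Or.inl hl)
  have hhr : heapHeight r = heapHeight v + 1 := hh_child (Or.inr hr)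
  have hvl : v ∉ sub l := by
    intro hc
    have := eq_of_mem_sub_of_hh_le hc (by omega)
    subst this; omega
  have hvr : v ∉ sub r := by
    intro hc
    have := eq_of_mem_sub_of_hh_le hc (by omega)
    subst this; omega
  refine ⟨?_, by simp [hvl, hvr], ?_⟩
  · ext u
    simp only [Finset.mem_insert, Finset.mem_union]
    constructor
    · intro hu
      by_cases hne : u = v
      · exact Or.inl hne
      right
      have hlt := hh_lt_of_mem_sub hu hne
      rw [mem_sub] at hu
      set k := heapHeight u - heapHeight v with hk
      have hk1 : 1 ≤ k := by omega
      have hq : ((u:ℕ)+1) / 2^(k-1) / 2 = (v:ℕ)+1 := by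
        rw [Nat.div_div_eq_div_mul, ← pow_succ]
        have hkk : k - 1 + 1 = k := by omega
        rw [hkk]; exact hu
      have hkl : heapHeight u - heapHeight l = k - 1 := by omega
      have hkr : heapHeight u - heapHeight r = k - 1 := by omega
      rw [mem_sub, hkl, mem_sub, hkr]
      omega
    · rintro (rfl | hu | hu)
      · exact mem_sub_self u
      · exact sub_trans hu (mem_sub_of_child (Or.inl hl))
      · exact sub_trans hu (mem_sub_of_child (Or.inr hr))
  · rw [Finset.disjoint_left]
    intro u hul hur
    rw [mem_sub] at hul hur
    rw [hhl] at hul; rw [hhr] at hur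
    omega


def abc : ℕ → ℕ × ℕ × ℕ
  | 0 => (1, 1, 0)
  | d+1 =>
    let p := abc d
    (1 + 2 * p.2.2, p.1 + min p.1 p.2.1, min (p.1 + min p.1 p.2.1) (2 * p.2.1))

lemma abc_closed (m : ℕ) (hm : 1 ≤ m) :
    ∃ a, 7 * a = 4 * 8 ^ m + 3 ∧ abc (3 * m) = (a, a + 2, a - 1) := by
  induction m, hm using Nat.le_induction with
  | base =>
    refine ⟨5, by norm_num, ?_⟩
    show abc 3 = _
    simp [abc]
  | succ m hm ih =>
    obtain ⟨a, ha7, habc⟩ := ih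
    have ha5 : 5 ≤ a := by
      have : 4 * 8 ≤ 4 * 8 ^ m := by
        have : (8:ℕ) ≤ 8 ^ m := Nat.le_self_pow (by omega) 8
        omega
      omega
    refine ⟨8 * a - 3, ?_, ?_⟩
    · have : (8:ℕ)^(m+1) = 8 * 8^m := by ring
      omega
    · have h1 : 3 * (m+1) = (3*m + 1) + 1 + 1 := by ring
      rw [h1]
      show (let p := abc (3*m+1+1); _) = _
      show (let p := (let p := abc (3*m+1); (1 + 2 * p.2.2, p.1 + min p.1 p.2.1, min (p.1 + min p.1 p.2.1) (2 * p.2.1))); (1 + 2 * p.2.2, p.1 + min p.1 p.2.1, min (p.1 + min p.1 p.2.1) (2 * p.2.1))) = _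
      have h2 : abc (3*m+1) = (2*a - 1, 2*a, 2*a) := by
        show (let p := abc (3*m); (1 + 2 * p.2.2, p.1 + min p.1 p.2.1, min (p.1 + min p.1 p.2.1) (2 * p.2.1))) = _
        rw [habc]
        simp only [Prod.mk.injEq]
        refine ⟨by omega, by omega, by omega⟩
      rw [h2]
      simp only [Prod.mk.injEq]
      refine ⟨by omega, by omega, by omega⟩

lemma maximal_iff {V : Type*} [DecidableEq V] [Fintype V] (G : SimpleGraph V) (W : Finset V) :
    G.IsMaximalIndepSet W ↔
      G.IsIndepSet' W ∧ ∀ x, x ∈ W ∨ ∃ y ∈ W, G.Adj x y := by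
  constructor
  · rintro ⟨hind, hmax⟩
    refine ⟨hind, ?_⟩
    intro x
    by_cases hx : x ∈ W
    · exact Or.inl hx
    right
    by_contra hc
    push_neg at hc
    apply hmax (insert x W) (Finset.ssubset_insert hx)
    intro u hu w hw
    rcases Finset.mem_insert.mp hu with h1 | h1 <;> rcases Finset.mem_insert.mp hw with h2 | h2
    · subst h1; subst h2; exact G.irrefl
    · subst h1; exact fun ha => hc w h2 ha
    · subst h2; exact fun ha => hc u h1 ha.symm
    · exact hind u h1 w h2
  · rintro ⟨hind, hdom⟩
    refine ⟨hind, ?_⟩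
    intro D hD hDind
    obtain ⟨x, hxD, hxW⟩ := Finset.exists_of_ssubset hD
    rcases hdom x with hx | ⟨y, hyW, hxy⟩
    · exact hxW hx
    · exact hDind x hxD y (hD.subset hyW) hxy

lemma card_decomp {h : ℕ} (W : Finset (Fin (N h))) (v l r : Fin (N h)) (hv : heapHeight v < h)
    (hl : (l:ℕ) = 2*(v:ℕ)+1) (hr : (r:ℕ) = 2*(v:ℕ)+2) :
    (W ∩ sub v).card =
      (if v ∈ W then 1 else 0) + (W ∩ sub l).card + (W ∩ sub r).card := by
  obtain ⟨hdec, hnm, hdisj⟩ := sub_decomp v l r hv hl hr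
  rw [hdec, Finset.inter_comm, Finset.inter_comm W (sub l), Finset.inter_comm W (sub r)]
  rw [Finset.mem_union, not_or] at hnm
  by_cases hvW : v ∈ W
  · rw [Finset.insert_inter_of_mem hvW, if_pos hvW]
    rw [Finset.card_insert_of_notMem (by
      simp only [Finset.mem_inter, Finset.mem_union]
      tauto)]
    rw [Finset.union_inter_distrib_right, Finset.card_union_of_disjoint
      (hdisj.mono Finset.inter_subset_left Finset.inter_subset_left)]
    omega
  · rw [Finset.insert_inter_of_notMem hvW, if_neg hvW]
    rw [Finset.union_inter_distrib_right, Finset.card_union_of_disjoint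
      (hdisj.mono Finset.inter_subset_left Finset.inter_subset_left)]
    omega


lemma abc_succ (d : ℕ) : abc (d+1) =
    (1 + 2*(abc d).2.2, (abc d).1 + min (abc d).1 (abc d).2.1,
     min ((abc d).1 + min (abc d).1 (abc d).2.1) (2*(abc d).2.1)) := rfl

lemma key {h : ℕ} (W : Finset (Fin (N h)))
    (hind : (perfectBinaryTree h).IsIndepSet' W)
    (hdom : ∀ x, x ∈ W ∨ ∃ y ∈ W, (perfectBinaryTree h).Adj x y) :
    ∀ d (v : Fin (N h)), heapHeight v + d = h →
      ((v ∈ W → (abc d).1 ≤ (W ∩ sub v).card) ∧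
       (v ∉ W → (∃ y ∈ W ∩ sub v, (perfectBinaryTree h).Adj v y) →
          (abc d).2.1 ≤ (W ∩ sub v).card) ∧
       (v ∉ W → (abc d).2.2 ≤ (W ∩ sub v).card)) := by
  intro d
  induction d with
  | zero =>
    intro v hv
    have hleaf : sub v = {v} := sub_leaf (by omega)
    refine ⟨?_, ?_, ?_⟩
    · intro hvW
      have hm : v ∈ W ∩ sub v := Finset.mem_inter.mpr ⟨hvW, mem_sub_self v⟩
      have := Finset.card_pos.mpr ⟨v, hm⟩
      simpa [abc] using this
    · rintro hvW ⟨y, hy, hadj⟩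
      rw [hleaf] at hy
      simp only [Finset.mem_inter, Finset.mem_singleton] at hy
      exact absurd (hy.2 ▸ hy.1) hvW
    · intro _; simp [abc]
  | succ d ih =>
    intro v hv
    have hvh : heapHeight v < h := by omega
    have hrlt : 2*(v:ℕ)+2 < N h := child_lt v hvh
    set l : Fin (N h) := ⟨2*(v:ℕ)+1, by omega⟩ with hldef
    set r : Fin (N h) := ⟨2*(v:ℕ)+2, by omega⟩ with hrdef
    have hlv : (l:ℕ) = 2*(v:ℕ)+1 := rfl
    have hrv : (r:ℕ) = 2*(v:ℕ)+2 := rfl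
    have hhl : heapHeight l = heapHeight v + 1 := hh_child (Or.inl hlv)
    have hhr : heapHeight r = heapHeight v + 1 := hh_child (Or.inr hrv)
    have ihl := ih l (by omega)
    have ihr := ih r (by omega)
    have hcard := card_decomp W v l r hvh hlv hrv
    have domChild : v ∉ W → ∀ u : Fin (N h), ((u:ℕ) = 2*(v:ℕ)+1 ∨ (u:ℕ) = 2*(v:ℕ)+2) →
        u ∉ W → ∃ y ∈ W ∩ sub u, (perfectBinaryTree h).Adj u y := by
      intro hvW u hu huW
      rcases hdom u with h1 | ⟨y, hyW, hadj⟩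
      · exact absurd h1 huW
      refine ⟨y, Finset.mem_inter.mpr ⟨hyW, ?_⟩, hadj⟩
      rw [adj_iff] at hadj
      rcases hadj with h1 | h1 | h1 | h1
      · exact mem_sub_of_child (Or.inl h1)
      · exact mem_sub_of_child (Or.inr h1)
      · exfalso; apply hvW
        rwa [show y = v from Fin.ext (by omega)] at hyW
      · exfalso; apply hvW
        rwa [show y = v from Fin.ext (by omega)] at hyW
    have claim1 : v ∈ W → (abc (d+1)).1 ≤ (W ∩ sub v).card := by
      intro hvW
      have hlW : l ∉ W := fun hlW => hind v hvW l hlW (adj_iff.mpr (Or.inl hlv))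
      have hrW : r ∉ W := fun hrW => hind v hvW r hrW (adj_iff.mpr (Or.inr (Or.inl hrv)))
      have c1 := ihl.2.2 hlW
      have c2 := ihr.2.2 hrW
      rw [hcard, if_pos hvW, abc_succ]
      simp only
      omega
    have claim2 : v ∉ W → (∃ y ∈ W ∩ sub v, (perfectBinaryTree h).Adj v y) →
        (abc (d+1)).2.1 ≤ (W ∩ sub v).card := by
      rintro hvW ⟨y, hy, hadj⟩
      obtain ⟨hyW, hySub⟩ := Finset.mem_inter.mp hy
      have hyne : y ≠ v := fun he => hvW (he ▸ hyW)
      have hylr : y = l ∨ y = r := by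
        rw [adj_iff] at hadj
        have hlt := hh_lt_of_mem_sub hySub hyne
        rcases hadj with h1 | h1 | h1 | h1
        · exact Or.inl (Fin.ext (by omega))
        · exact Or.inr (Fin.ext (by omega))
        · exfalso; have := hh_child (x := y) (y := v) (Or.inl h1); omega
        · exfalso; have := hh_child (x := y) (y := v) (Or.inr h1); omega
      rcases hylr with rfl | rfl
      · have c1 := ihl.1 hyW
        have c2 : min (abc d).1 (abc d).2.1 ≤ (W ∩ sub r).card := by
          by_cases hrW : r ∈ W
          · exact le_trans (min_le_left _ _) (ihr.1 hrW)
          · exact le_trans (min_le_right _ _)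
              (ihr.2.1 hrW (domChild hvW r (Or.inr hrv) hrW))
        rw [hcard, if_neg hvW, abc_succ]
        simp only
        omega
      · have c1 := ihr.1 hyW
        have c2 : min (abc d).1 (abc d).2.1 ≤ (W ∩ sub l).card := by
          by_cases hlW : l ∈ W
          · exact le_trans (min_le_left _ _) (ihl.1 hlW)
          · exact le_trans (min_le_right _ _)
              (ihl.2.1 hlW (domChild hvW l (Or.inl hlv) hlW))
        rw [hcard, if_neg hvW, abc_succ]
        simp only
        omega
    refine ⟨claim1, claim2, ?_⟩
    intro hvW
    by_cases hlr : l ∈ W ∨ r ∈ W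
    · have hex : ∃ y ∈ W ∩ sub v, (perfectBinaryTree h).Adj v y := by
        rcases hlr with hlW | hrW
        · exact ⟨l, Finset.mem_inter.mpr ⟨hlW, mem_sub_of_child (Or.inl hlv)⟩,
            adj_iff.mpr (Or.inl hlv)⟩
        · exact ⟨r, Finset.mem_inter.mpr ⟨hrW, mem_sub_of_child (Or.inr hrv)⟩,
            adj_iff.mpr (Or.inr (Or.inl hrv))⟩
      have hb := claim2 hvW hex
      rw [abc_succ] at hb ⊢
      simp only at hb ⊢
      omega
    · push_neg at hlr
      obtain ⟨hlW, hrW⟩ := hlr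
      have c1 := ihl.2.1 hlW (domChild hvW l (Or.inl hlv) hlW)
      have c2 := ihr.2.1 hrW (domChild hvW r (Or.inr hrv) hrW)
      rw [hcard, if_neg hvW, abc_succ]
      simp only
      omega


lemma lower {h : ℕ} (W : Finset (Fin (N h)))
    (hW : (perfectBinaryTree h).IsMaximalIndepSet W) :
    (abc h).1 ≤ W.card ∨ (abc h).2.1 ≤ W.card := by
  obtain ⟨hind, hdom⟩ := (maximal_iff _ _).mp hW
  have hpos : 0 < N h := by
    have := pow_pos' (h+1)
    have h2 : (2:ℕ)^(h+1) = 2*2^h := by ring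
    have := pow_pos' h
    simp only [N]; omega
  set v0 : Fin (N h) := ⟨0, hpos⟩ with hv0def
  have hv0 : (v0:ℕ) = 0 := rfl
  have hh0 : heapHeight v0 = 0 := by
    simp [heapHeight, hv0]
  have hsub := sub_root v0 hv0
  have hk := key W hind hdom h v0 (by rw [hh0]; omega)
  by_cases hv0W : v0 ∈ W
  · left
    have := hk.1 hv0W
    rwa [hsub, Finset.inter_univ] at this
  · right
    rcases hdom v0 with h1 | ⟨y, hyW, hadj⟩
    · exact absurd h1 hv0W
    have := hk.2.1 hv0W ⟨y, Finset.mem_inter.mpr ⟨hyW, by rw [hsub]; exact Finset.mem_univ y⟩, hadj⟩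
    rwa [hsub, Finset.inter_univ] at this

lemma card_level {h t : ℕ} (ht : t ≤ h) :
    (Finset.univ.filter fun v : Fin (N h) => heapHeight v = t).card = 2^t := by
  have hple : (2:ℕ)^(t+1) ≤ 2^(h+1) := Nat.pow_le_pow_right (by norm_num) (by omega)
  have hb : ∀ a ∈ Finset.Ico (2^t - 1) (2^(t+1) - 1), a < N h := by
    intro a ha
    rw [Finset.mem_Ico] at ha
    simp only [N]; omega
  have heq : (Finset.univ.filter fun v : Fin (N h) => heapHeight v = t)
      = (Finset.Ico (2^t - 1) (2^(t+1) - 1)).attachFin hb := by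
    ext v
    rw [Finset.mem_attachFin, Finset.mem_Ico, Finset.mem_filter]
    have hpt := pow_pos' t
    constructor
    · rintro ⟨_, ht'⟩
      obtain ⟨h1, h2⟩ := hh_spec v
      rw [ht'] at h1 h2
      omega
    · intro hv
      refine ⟨Finset.mem_univ v, hh_eq_of v (by omega) (by omega)⟩
  rw [heq, Finset.card_attachFin, Nat.card_Ico]
  have h2 : (2:ℕ)^(t+1) = 2*2^t := by ring
  have := pow_pos' t
  omega

lemma sum_g : ∀ m : ℕ,
    7 * ∑ t ∈ Finset.range (3*m+1), (if (t = 0 ∨ t % 3 = 2) then 2^t else 0) = 4*8^m+3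
  | 0 => by norm_num
  | m+1 => by
    have h1 : 3*(m+1)+1 = ((3*m+1)+1)+1+1 := by ring
    rw [h1, Finset.sum_range_succ, Finset.sum_range_succ, Finset.sum_range_succ]
    have e := sum_g m
    have hc1 : ¬((3*m+1)+1+1 = 0 ∨ ((3*m+1)+1+1) % 3 = 2) := by omega
    have hc2 : ((3*m+1)+1 = 0 ∨ ((3*m+1)+1) % 3 = 2) := by omega
    have hc3 : ¬(3*m+1 = 0 ∨ (3*m+1) % 3 = 2) := by omega
    rw [if_neg hc1, if_pos hc2, if_neg hc3]
    have hpB : (2:ℕ)^(3*m+2) = 4*8^m := by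
      rw [pow_add, pow_mul]; norm_num; ring
    have hpA : (2:ℕ)^(3*m+1+1) = 4*8^m := by
      rw [show 3*m+1+1 = 3*m+2 by ring]; exact hpB
    have hp8 : (8:ℕ)^(m+1) = 8*8^m := by ring
    omega

lemma card_S (m : ℕ) (hm : 1 ≤ m) :
    7 * (Finset.univ.filter (fun v : Fin (N (3*m)) =>
      heapHeight v = 0 ∨ (heapHeight v % 3 = 2 ∧ heapHeight v ≤ 3*m-1))).card = 4*8^m+3 := by
  set S := Finset.univ.filter (fun v : Fin (N (3*m)) =>
      heapHeight v = 0 ∨ (heapHeight v % 3 = 2 ∧ heapHeight v ≤ 3*m-1)) with hSdef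
  have h1 : S.card = ∑ t ∈ Finset.range (3*m+1), (S.filter (fun v => heapHeight v = t)).card :=
    Finset.card_eq_sum_card_fiberwise
      (fun v _ => Finset.mem_range.mpr (Nat.lt_succ_of_le (hh_le v)))
  have h2 : ∀ t ∈ Finset.range (3*m+1), (S.filter (fun v => heapHeight v = t)).card
      = if (t = 0 ∨ t % 3 = 2) then 2^t else 0 := by
    intro t htr
    rw [Finset.mem_range] at htr
    have hiff : (t = 0 ∨ (t % 3 = 2 ∧ t ≤ 3*m-1)) ↔ (t = 0 ∨ t % 3 = 2) := by omega
    by_cases hP : t = 0 ∨ t % 3 = 2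
    · rw [if_pos hP, ← card_level (h := 3*m) (t := t) (by omega)]
      congr 1
      rw [hSdef, Finset.filter_filter]
      apply Finset.filter_congr
      intro v _
      constructor
      · exact fun hx => hx.2
      · intro hv
        exact ⟨by rw [hv]; exact hiff.mpr hP, hv⟩
    · rw [if_neg hP, Finset.card_eq_zero, Finset.filter_eq_empty_iff]
      intro v hv
      rw [hSdef, Finset.mem_filter] at hv
      intro he
      rw [he] at hv
      exact hP (hiff.mp hv.2)
  rw [h1, Finset.sum_congr rfl h2]
  exact sum_g m


lemma S_indep (m : ℕ) (hm : 1 ≤ m) :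
    (perfectBinaryTree (3*m)).IsIndepSet'
      (Finset.univ.filter (fun v : Fin (N (3*m)) =>
        heapHeight v = 0 ∨ (heapHeight v % 3 = 2 ∧ heapHeight v ≤ 3*m-1))) := by
  intro u hu w hw hadj
  rw [Finset.mem_filter] at hu hw
  rw [adj_iff] at hadj
  rcases hadj with h1 | h1 | h1 | h1
  · have := hh_child (x := u) (y := w) (Or.inl h1)
    have hu2 := hu.2; have hw2 := hw.2; omega
  · have := hh_child (x := u) (y := w) (Or.inr h1)
    have hu2 := hu.2; have hw2 := hw.2; omega
  · have := hh_child (x := w) (y := u) (Or.inl h1)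
    have hu2 := hu.2; have hw2 := hw.2; omega
  · have := hh_child (x := w) (y := u) (Or.inr h1)
    have hu2 := hu.2; have hw2 := hw.2; omega

lemma S_dom (m : ℕ) (hm : 1 ≤ m) :
    ∀ x : Fin (N (3*m)),
      x ∈ (Finset.univ.filter (fun v : Fin (N (3*m)) =>
        heapHeight v = 0 ∨ (heapHeight v % 3 = 2 ∧ heapHeight v ≤ 3*m-1))) ∨
      ∃ y ∈ (Finset.univ.filter (fun v : Fin (N (3*m)) =>
        heapHeight v = 0 ∨ (heapHeight v % 3 = 2 ∧ heapHeight v ≤ 3*m-1))),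
        (perfectBinaryTree (3*m)).Adj x y := by
  intro x
  by_cases hx : heapHeight x = 0 ∨ (heapHeight x % 3 = 2 ∧ heapHeight x ≤ 3*m-1)
  · exact Or.inl (Finset.mem_filter.mpr ⟨Finset.mem_univ x, hx⟩)
  right
  have ht := hh_le x
  have ht0 : heapHeight x ≠ 0 := fun he => hx (Or.inl he)
  have ht2 : ¬(heapHeight x % 3 = 2) := by
    intro he
    exact hx (Or.inr ⟨he, by omega⟩)
  by_cases hcase : heapHeight x % 3 = 1 ∧ 4 ≤ heapHeight x
  · -- use child 2x+2
    have hlt : heapHeight x < 3*m := by omega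
    have hzlt : 2*(x:ℕ)+2 < N (3*m) := child_lt x hlt
    set z : Fin (N (3*m)) := ⟨2*(x:ℕ)+2, hzlt⟩ with hzdef
    have hzv : (z:ℕ) = 2*(x:ℕ)+2 := rfl
    have hhz : heapHeight z = heapHeight x + 1 := hh_child (Or.inr hzv)
    refine ⟨z, Finset.mem_filter.mpr ⟨Finset.mem_univ z, Or.inr ⟨by omega, by omega⟩⟩,
      adj_iff.mpr (Or.inr (Or.inl hzv))⟩
  · -- use parent
    have hx1 : 1 ≤ (x:ℕ) := by
      obtain ⟨hs1, hs2⟩ := hh_spec x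
      have h2t : (2:ℕ) ≤ 2^(heapHeight x) := by
        calc (2:ℕ) = 2^1 := rfl
        _ ≤ 2^(heapHeight x) := Nat.pow_le_pow_right (by norm_num) (by omega)
      omega
    have hqx : ((x:ℕ)+1)/2 - 1 < N (3*m) := by
      have := x.2
      omega
    set y : Fin (N (3*m)) := ⟨((x:ℕ)+1)/2 - 1, hqx⟩ with hydef
    have hyv : (y:ℕ)+1 = ((x:ℕ)+1)/2 := by
      have hv : (y:ℕ) = ((x:ℕ)+1)/2 - 1 := rfl
      omega
    have hadj : (x:ℕ) = 2*(y:ℕ)+1 ∨ (x:ℕ) = 2*(y:ℕ)+2 := by omega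
    have hhy : heapHeight y = heapHeight x - 1 := by
      obtain ⟨hs1, hs2⟩ := hh_spec x
      set t := heapHeight x with htd
      have e3 : t = t-1+1 := by omega
      have e1 : (2:ℕ)^(t-1) * 2 = 2^t := by rw [← pow_succ, ← e3]
      have e2 : (2:ℕ)^t * 2 = 2^(t+1) := by rw [← pow_succ]
      apply hh_eq_of
      · omega
      · rw [pow_succ]
        omega
    refine ⟨y, Finset.mem_filter.mpr ⟨Finset.mem_univ y, ?_⟩,
      adj_iff.mpr (Or.inr (Or.inr hadj))⟩
    by_cases hxone : heapHeight x = 1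
    · exact Or.inl (by omega)
    · have hmod : heapHeight x % 3 = 0 := by omega
      exact Or.inr ⟨by omega, by omega⟩

end PBT

/-- For a perfect binary tree of height h = 3m (m >= 1), the minimum size of a
maximal independent set is (4*8^m + 3)/7, attained by the set consisting of
the root together with all vertices at heights h-1, h-4, ..., 2 (i.e. the
vertices whose height is congruent to 2 mod 3 and at most h-1). -/
theorem minMaximalIndepSetSize_perfectBinaryTree_height_three_mul (m : ℕ) (hm : 1 ≤ m) :
    7 * (perfectBinaryTree (3 * m)).minMaximalIndepSetSize = 4 * 8 ^ m + 3 ∧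
    ((perfectBinaryTree (3 * m)).IsMaximalIndepSet
        (Finset.univ.filter (fun v : Fin (2 ^ (3 * m + 1) - 1) =>
          heapHeight v = 0 ∨ (heapHeight v % 3 = 2 ∧ heapHeight v ≤ 3 * m - 1))) ∧
      (Finset.univ.filter (fun v : Fin (2 ^ (3 * m + 1) - 1) =>
          heapHeight v = 0 ∨ (heapHeight v % 3 = 2 ∧ heapHeight v ≤ 3 * m - 1))).card =
        (perfectBinaryTree (3 * m)).minMaximalIndepSetSize) := by
  classical
  obtain ⟨a, ha7, habc⟩ := PBT.abc_closed m hm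
  set S := (Finset.univ.filter (fun v : Fin (2 ^ (3 * m + 1) - 1) =>
      heapHeight v = 0 ∨ (heapHeight v % 3 = 2 ∧ heapHeight v ≤ 3 * m - 1))) with hSdef
  have hSmax : (perfectBinaryTree (3*m)).IsMaximalIndepSet S :=
    (PBT.maximal_iff _ _).mpr ⟨PBT.S_indep m hm, PBT.S_dom m hm⟩
  have hcardS7 : 7 * S.card = 4*8^m+3 := PBT.card_S m hm
  have hSa : S.card = a := by omega
  have hmin : (perfectBinaryTree (3*m)).minMaximalIndepSetSize = a := by
    unfold SimpleGraph.minMaximalIndepSetSize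
    apply le_antisymm
    · exact Nat.sInf_le ⟨S, hSmax, hSa⟩
    · refine le_csInf ⟨S.card, ⟨S, hSmax, rfl⟩⟩ ?_
      rintro k ⟨W, hWmax, rfl⟩
      have hl := PBT.lower W hWmax
      rw [habc] at hl
      simp only at hl
      omega
  refine ⟨by rw [hmin]; exact ha7, hSmax, by rw [hmin, hSa]⟩
end
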